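/- arXiv:2209.10615 — 5 statements merged into one kernel-verified Lean document; each statement's English description precedes it below -/
import Mathlib

section
/- Let p be a positive natural number and let γ denote the standard Gaussian measure on EuclideanSpace ℝ (Fin p) (the product of p copies of the real Gaussian N(0,1)). Let c > 0 and b ≥ 0 be real numbers and let β : EuclideanSpace ℝ (Fin p) → ℝ be a measurable function with |β(x)| ≤ b for all x. Then for every θ ∈ EuclideanSpace ℝ (Fin p), the integrand Δ ↦ ((β(θ + c • Δ) − β(θ))/c) • Δ is γ-integrable and its Bochner integral v := ∫ ((β(θ + c • Δ) − β(θ))/c) • Δ dγ(Δ) satisfies ‖v‖ ≤ 2·b·√p / c. Consequently, if f : EuclideanSpace ℝ (Fin p) → ℝ is measurable and Δ ↦ ((f(θ + c • Δ) − f(θ))/c) • Δ is γ-integrable, then the mean of the two-point gradient estimator built from the biased evaluations F := f + β differs from that built from f by at most 2·b·√p / c in Euclidean norm: ‖∫ ((F(θ + c•Δ) − F(θ))/c) • Δ dγ(Δ) − ∫ ((f(θ + c•Δ) − f(θ))/c) • Δ dγ(Δ)‖ ≤ 2·b·√p / c. -/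
open MeasureTheory ProbabilityTheory

/-- The standard Gaussian measure on `EuclideanSpace ℝ (Fin p)`: the product of `p`
copies of the real Gaussian `N(0,1)`, transported to `EuclideanSpace`. -/
noncomputable def stdGaussianE (p : ℕ) : Measure (EuclideanSpace ℝ (Fin p)) :=
  (Measure.pi fun _ : Fin p => gaussianReal 0 1).map
    (MeasurableEquiv.toLp 2 (Fin p → ℝ))

open Real Filter
open scoped ENNReal NNReal

lemma tendsto_aux : Tendsto (fun y : ℝ => y * Real.exp (-2⁻¹ * y ^ 2)) atTop (nhds 0) := by
  have h := rpow_mul_exp_neg_mul_sq_isLittleO_exp_neg (by norm_num : (0:ℝ) < 2⁻¹) 1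
  simp only [Real.rpow_one] at h
  have h2 : Tendsto (fun x : ℝ => Real.exp (-(1/2) * x)) atTop (nhds 0) := by
    have := Real.tendsto_exp_atBot.comp
      (tendsto_neg_atTop_atBot.comp (tendsto_id.const_mul_atTop (by norm_num : (0:ℝ) < 1/2)))
    refine this.congr fun x => by simp [Function.comp, neg_mul]
  exact h.isBigO.trans_tendsto h2

lemma integrable_sq_exp : Integrable (fun x : ℝ => x ^ 2 * Real.exp (-2⁻¹ * x ^ 2)) := by
  have := integrable_rpow_mul_exp_neg_mul_sq (by norm_num : (0:ℝ) < 2⁻¹) (s := 2) (by norm_num)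
  simpa [Real.rpow_natCast] using this

lemma int_sq_exp : ∫ x : ℝ, x ^ 2 * Real.exp (-2⁻¹ * x ^ 2) = Real.sqrt (2 * π) := by
  have hexp : Integrable (fun x : ℝ => Real.exp (-2⁻¹ * x ^ 2)) :=
    integrable_exp_neg_mul_sq (by norm_num)
  have hderiv : ∀ x : ℝ, HasDerivAt (fun y : ℝ => -y * Real.exp (-2⁻¹ * y ^ 2))
      (x ^ 2 * Real.exp (-2⁻¹ * x ^ 2) - Real.exp (-2⁻¹ * x ^ 2)) x := by
    intro x
    have h1 : HasDerivAt (fun y : ℝ => -2⁻¹ * y ^ 2) (-x) x := by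
      simpa using ((hasDerivAt_pow 2 x).const_mul (-2⁻¹ : ℝ))
    have h2 := (h1.exp).const_mul (-x)
    have h3 := ((hasDerivAt_id x).neg.mul (h1.exp))
    refine h3.congr_deriv ?_
    simp only [Pi.neg_apply, id]
    ring
  have hint : Integrable (fun x : ℝ =>
      x ^ 2 * Real.exp (-2⁻¹ * x ^ 2) - Real.exp (-2⁻¹ * x ^ 2)) :=
    integrable_sq_exp.sub hexp
  have htop : Tendsto (fun y : ℝ => -y * Real.exp (-2⁻¹ * y ^ 2)) atTop (nhds 0) := by
    simpa [neg_mul] using tendsto_aux.neg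
  have hbot : Tendsto (fun y : ℝ => -y * Real.exp (-2⁻¹ * y ^ 2)) atBot (nhds 0) := by
    have := tendsto_aux.comp tendsto_neg_atBot_atTop
    refine this.congr fun x => ?_
    simp [Function.comp, neg_mul]
  have h0 := integral_of_hasDerivAt_of_tendsto hderiv hint hbot htop
  rw [sub_zero] at h0
  have := integral_sub integrable_sq_exp hexp
  rw [this] at h0
  have hg : ∫ x : ℝ, Real.exp (-2⁻¹ * x ^ 2) = Real.sqrt (2 * π) := by
    have hg := integral_gaussian 2⁻¹
    rw [show π / 2⁻¹ = 2 * π by ring] at hg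
    exact hg
  linarith [h0, hg]

lemma gaussianPDFReal_std (x : ℝ) :
    gaussianPDFReal 0 1 x = (Real.sqrt (2 * π))⁻¹ * Real.exp (-2⁻¹ * x ^ 2) := by
  simp [gaussianPDFReal]
  ring_nf
  exact Or.inl trivial

lemma gauss_sq_integrable : Integrable (fun x : ℝ => x ^ 2) (gaussianReal 0 1) := by
  rw [gaussianReal_of_var_ne_zero 0 one_ne_zero]
  rw [integrable_withDensity_iff (measurable_gaussianPDF 0 1)
    (Filter.Eventually.of_forall fun x => ENNReal.ofReal_lt_top)]
  have : ∀ x : ℝ, x ^ 2 * ((gaussianPDF 0 1 x).toReal)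
      = (Real.sqrt (2 * π))⁻¹ * (x ^ 2 * Real.exp (-2⁻¹ * x ^ 2)) := by
    intro x
    rw [gaussianPDF, ENNReal.toReal_ofReal (gaussianPDFReal_nonneg 0 1 x),
      gaussianPDFReal_std]
    ring
  simp only [this]
  exact integrable_sq_exp.const_mul _

lemma gauss_sq_integral : ∫ x, x ^ 2 ∂(gaussianReal 0 1) = 1 := by
  rw [gaussianReal_of_var_ne_zero 0 one_ne_zero]
  have hrw : (ℙ : Measure ℝ).withDensity (gaussianPDF 0 1)
      = (ℙ : Measure ℝ).withDensity (fun x => ((gaussianPDFReal 0 1 x).toNNReal : ℝ≥0∞)) := rfl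
  rw [hrw, integral_withDensity_eq_integral_smul
    ((measurable_gaussianPDFReal 0 1).real_toNNReal)]
  have : ∀ x : ℝ, ((gaussianPDFReal 0 1 x).toNNReal : ℝ≥0) • (x ^ 2)
      = (Real.sqrt (2 * π))⁻¹ * (x ^ 2 * Real.exp (-2⁻¹ * x ^ 2)) := by
    intro x
    rw [NNReal.smul_def, Real.coe_toNNReal _ (gaussianPDFReal_nonneg 0 1 x),
      gaussianPDFReal_std]
    simp [smul_eq_mul]; ring
  simp only [this]
  rw [integral_const_mul, int_sq_exp]
  rw [inv_mul_cancel₀]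
  positivity

lemma pi_map_eval (p : ℕ) (i : Fin p) :
    (Measure.pi fun _ : Fin p => gaussianReal 0 1).map (fun x => x i) = gaussianReal 0 1 := by
  refine Measure.ext fun s hs => ?_
  rw [Measure.map_apply (measurable_pi_apply i) hs]
  have : (fun x : Fin p → ℝ => x i) ⁻¹' s
      = Set.pi Set.univ (Function.update (fun _ => Set.univ) i s) := by
    rw [Set.eval_preimage]
  rw [this, Measure.pi_pi]
  rw [Finset.prod_eq_single i]
  · simp
  · intro j _ hj; simp [Function.update_of_ne hj]
  · simp

lemma coord_sq_integrable (p : ℕ) (i : Fin p) :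
    Integrable (fun x : Fin p → ℝ => x i ^ 2)
      (Measure.pi fun _ : Fin p => gaussianReal 0 1) := by
  have h := gauss_sq_integrable
  rw [← pi_map_eval p i] at h
  exact h.comp_measurable (measurable_pi_apply i)

lemma coord_sq_integral (p : ℕ) (i : Fin p) :
    ∫ x, x i ^ 2 ∂(Measure.pi fun _ : Fin p => gaussianReal 0 1) = 1 := by
  have := integral_map (μ := Measure.pi fun _ : Fin p => gaussianReal 0 1)
    (f := fun t : ℝ => t ^ 2)
    (measurable_pi_apply i : Measurable fun x : Fin p → ℝ => x i).aemeasurable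
    (by exact (measurable_id.pow_const 2).aestronglyMeasurable)
  rw [pi_map_eval p i] at this
  rw [← this, gauss_sq_integral]

instance stdGaussianE_prob (p : ℕ) : IsProbabilityMeasure (stdGaussianE p) := by
  unfold stdGaussianE
  exact Measure.isProbabilityMeasure_map
    (MeasurableEquiv.toLp 2 (Fin p → ℝ)).measurable.aemeasurable

lemma normsq_integrable (p : ℕ) :
    Integrable (fun Δ : EuclideanSpace ℝ (Fin p) => ‖Δ‖ ^ 2) (stdGaussianE p) := by
  unfold stdGaussianE
  rw [integrable_map_measure
    (by exact (measurable_norm.pow_const 2).aestronglyMeasurable)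
    (MeasurableEquiv.toLp 2 (Fin p → ℝ)).measurable.aemeasurable]
  have : ((fun Δ : EuclideanSpace ℝ (Fin p) => ‖Δ‖ ^ 2)
      ∘ (MeasurableEquiv.toLp 2 (Fin p → ℝ)))
      = fun x : Fin p → ℝ => ∑ i, x i ^ 2 := by
    funext x
    simp only [Function.comp]
    rw [EuclideanSpace.norm_eq, Real.sq_sqrt (by positivity)]
    simp only [Real.norm_eq_abs, sq_abs]
    rfl
  rw [this]
  exact integrable_finset_sum _ fun i _ => coord_sq_integrable p i

lemma normsq_integral (p : ℕ) :
    ∫ Δ, ‖Δ‖ ^ 2 ∂(stdGaussianE p) = p := by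
  unfold stdGaussianE
  rw [integral_map (MeasurableEquiv.toLp 2 (Fin p → ℝ)).measurable.aemeasurable
    (by exact (measurable_norm.pow_const 2).aestronglyMeasurable)]
  have : ∀ x : Fin p → ℝ, ‖(MeasurableEquiv.toLp 2 (Fin p → ℝ)) x‖ ^ 2
      = ∑ i, x i ^ 2 := by
    intro x
    rw [EuclideanSpace.norm_eq, Real.sq_sqrt (by positivity)]
    simp only [Real.norm_eq_abs, sq_abs]
    rfl
  simp only [this]
  rw [integral_finset_sum _ fun i _ => coord_sq_integrable p i]
  simp [coord_sq_integral]

lemma norm_memLp2 (p : ℕ) :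
    MemLp (fun Δ : EuclideanSpace ℝ (Fin p) => ‖Δ‖) 2 (stdGaussianE p) :=
  (memLp_two_iff_integrable_sq measurable_norm.aestronglyMeasurable).mpr (normsq_integrable p)

lemma norm_integrable (p : ℕ) :
    Integrable (fun Δ : EuclideanSpace ℝ (Fin p) => ‖Δ‖) (stdGaussianE p) :=
  (norm_memLp2 p).integrable one_le_two

lemma norm_integral_le (p : ℕ) :
    ∫ Δ, ‖Δ‖ ∂(stdGaussianE p) ≤ Real.sqrt p := by
  have hvar := variance_nonneg (fun Δ : EuclideanSpace ℝ (Fin p) => ‖Δ‖) (stdGaussianE p)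
  rw [variance_eq_sub (norm_memLp2 p)] at hvar
  simp only [Pi.pow_apply] at hvar
  rw [normsq_integral p] at hvar
  refine (Real.le_sqrt (integral_nonneg fun Δ => norm_nonneg Δ) (Nat.cast_nonneg p)).mpr ?_
  linarith

/-- if the systematic bias `β` of function evaluations is measurable and
bounded by `b`, then the Gaussian two-point integrand built from `β` is integrable with
mean of norm at most `2·b·√p / c`; consequently the mean two-point gradient estimator
built from the biased evaluations `F = f + β` differs from the one built from `f` by at
most `2·b·√p / c` in Euclidean norm. -/
theorem two_point_estimator_bias_bound
    (p : ℕ) (hp : 0 < p) (c b : ℝ) (hc : 0 < c) (hb : 0 ≤ b)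
    (β : EuclideanSpace ℝ (Fin p) → ℝ) (hβm : Measurable β)
    (hβb : ∀ x, |β x| ≤ b) (θ : EuclideanSpace ℝ (Fin p)) :
    Integrable (fun Δ : EuclideanSpace ℝ (Fin p) =>
        ((β (θ + c • Δ) - β θ) / c) • Δ) (stdGaussianE p) ∧
    ‖∫ Δ, ((β (θ + c • Δ) - β θ) / c) • Δ ∂(stdGaussianE p)‖
      ≤ 2 * b * Real.sqrt p / c ∧
    ∀ f : EuclideanSpace ℝ (Fin p) → ℝ, Measurable f →
      Integrable (fun Δ : EuclideanSpace ℝ (Fin p) =>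
        ((f (θ + c • Δ) - f θ) / c) • Δ) (stdGaussianE p) →
      ‖(∫ Δ, (((f (θ + c • Δ) + β (θ + c • Δ)) - (f θ + β θ)) / c) • Δ ∂(stdGaussianE p))
          - ∫ Δ, ((f (θ + c • Δ) - f θ) / c) • Δ ∂(stdGaussianE p)‖
        ≤ 2 * b * Real.sqrt p / c := by
  set γ := stdGaussianE p
  -- measurability of the β-integrand
  have hmeas : Measurable (fun Δ : EuclideanSpace ℝ (Fin p) =>
      ((β (θ + c • Δ) - β θ) / c) • Δ) := by
    have h1 : Measurable (fun Δ : EuclideanSpace ℝ (Fin p) => θ + c • Δ) :=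
      (continuous_const.add (continuous_const_smul c)).measurable
    exact (((hβm.comp h1).sub measurable_const).div_const c).smul measurable_id
  -- pointwise norm bound
  have hbound : ∀ Δ : EuclideanSpace ℝ (Fin p),
      ‖((β (θ + c • Δ) - β θ) / c) • Δ‖ ≤ (2 * b / c) * ‖Δ‖ := by
    intro Δ
    rw [norm_smul, Real.norm_eq_abs, abs_div, abs_of_pos hc]
    gcongr
    calc |β (θ + c • Δ) - β θ| ≤ |β (θ + c • Δ)| + |β θ| := abs_sub _ _
      _ ≤ b + b := add_le_add (hβb _) (hβb _)
      _ = 2 * b := by ring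
  -- integrability
  have hg : Integrable (fun Δ : EuclideanSpace ℝ (Fin p) => (2 * b / c) * ‖Δ‖) γ :=
    (norm_integrable p).const_mul _
  have hint : Integrable (fun Δ : EuclideanSpace ℝ (Fin p) =>
      ((β (θ + c • Δ) - β θ) / c) • Δ) γ := by
    refine hg.mono hmeas.aestronglyMeasurable (Filter.Eventually.of_forall fun Δ => ?_)
    calc ‖((β (θ + c • Δ) - β θ) / c) • Δ‖ ≤ (2 * b / c) * ‖Δ‖ := hbound Δ
      _ ≤ ‖(2 * b / c) * ‖Δ‖‖ := le_abs_self _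
  refine ⟨hint, ?_, ?_⟩
  · -- norm of integral bound
    have h1 : ‖∫ Δ, ((β (θ + c • Δ) - β θ) / c) • Δ ∂γ‖
        ≤ ∫ Δ, (2 * b / c) * ‖Δ‖ ∂γ :=
      norm_integral_le_of_norm_le hg (Filter.Eventually.of_forall hbound)
    rw [integral_const_mul] at h1
    have h2 : (2 * b / c) * ∫ Δ, ‖Δ‖ ∂γ ≤ (2 * b / c) * Real.sqrt p := by
      exact mul_le_mul_of_nonneg_left (norm_integral_le p) (by positivity)
    calc ‖∫ Δ, ((β (θ + c • Δ) - β θ) / c) • Δ ∂γ‖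
        ≤ (2 * b / c) * Real.sqrt p := h1.trans h2
      _ = 2 * b * Real.sqrt p / c := by ring
  · intro f hfm hfint
    have hkey : (fun Δ : EuclideanSpace ℝ (Fin p) =>
        (((f (θ + c • Δ) + β (θ + c • Δ)) - (f θ + β θ)) / c) • Δ)
        = fun Δ => ((f (θ + c • Δ) - f θ) / c) • Δ + ((β (θ + c • Δ) - β θ) / c) • Δ := by
      funext Δ
      rw [← add_smul]
      congr 1
      ring
    rw [hkey, integral_add hfint hint, add_sub_cancel_left]
    -- reuse the second bullet
    have h1 : ‖∫ Δ, ((β (θ + c • Δ) - β θ) / c) • Δ ∂γ‖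
        ≤ ∫ Δ, (2 * b / c) * ‖Δ‖ ∂γ :=
      norm_integral_le_of_norm_le hg (Filter.Eventually.of_forall hbound)
    rw [integral_const_mul] at h1
    have h2 : (2 * b / c) * ∫ Δ, ‖Δ‖ ∂γ ≤ (2 * b / c) * Real.sqrt p := by
      exact mul_le_mul_of_nonneg_left (norm_integral_le p) (by positivity)
    calc ‖∫ Δ, ((β (θ + c • Δ) - β θ) / c) • Δ ∂γ‖
        ≤ (2 * b / c) * Real.sqrt p := h1.trans h2
      _ = 2 * b * Real.sqrt p / c := by ring
end

section
/- Let p be a positive natural number, E := EuclideanSpace ℝ (Fin p), and let F : E → ℝ be differentiable with L-Lipschitz gradient for some L > 0. Fix θ ∈ E, a deterministic vector b⃗ ∈ E with ‖b⃗‖ ≤ β (β ≥ 0), and a random vector r : Ω → E on a probability space (Ω, μ) that is integrable with square-integrable norm, E[r] = 0 (Bochner integral), and E[‖r‖²] ≤ σ². Set g := ∇F(θ) + r + b⃗ and θ⁺ := θ − α • g for a stepsize α > 0. Then F(θ⁺) is integrable and E[F(θ⁺)] ≤ F(θ) − (α/2)·(1 − 2·α·L)·‖∇F(θ)‖² + (α/2)·β²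 + (L·α²/2)·(σ² + 2·β²). -/
open MeasureTheory

local notation "⟪" x ", " y "⟫" => @inner ℝ _ _ x y

lemma descent_lemma {E : Type*} [NormedAddCommGroup E] [InnerProductSpace ℝ E]
    [CompleteSpace E]
    (F : E → ℝ) (hF : Differentiable ℝ F) (L : ℝ)
    (hLip : ∀ x y, ‖gradient F x - gradient F y‖ ≤ L * ‖x - y‖) (x v : E) :
    F (x + v) ≤ F x + ⟪gradient F x, v⟫ + L / 2 * ‖v‖ ^ 2 := by
  set φ : ℝ → ℝ := fun t => F (x + t • v) - t * ⟪gradient F x, v⟫ - L * t ^ 2 / 2 * ‖v‖ ^ 2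
    with hφ
  have hder : ∀ t : ℝ, HasDerivAt φ
      (⟪gradient F (x + t • v), v⟫ - ⟪gradient F x, v⟫ - L * t * ‖v‖ ^ 2) t := by
    intro t
    have hline : HasDerivAt (fun t : ℝ => x + t • v) v t := by
      simpa using ((hasDerivAt_id t).smul_const v).const_add x
    have h1 : HasDerivAt (fun t : ℝ => F (x + t • v)) ⟪gradient F (x + t • v), v⟫ t := by
      have := ((hF (x + t • v)).hasGradientAt.hasFDerivAt).comp_hasDerivAt t hline
      simpa [Function.comp_def] using this
    have h2 : HasDerivAt (fun t : ℝ => t * ⟪gradient F x, v⟫) ⟪gradient F x, v⟫ t := by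
      simpa using (hasDerivAt_id t).mul_const ⟪gradient F x, v⟫
    have h3 : HasDerivAt (fun t : ℝ => L * t ^ 2 / 2 * ‖v‖ ^ 2) (L * t * ‖v‖ ^ 2) t := by
      have := ((hasDerivAt_pow 2 t).const_mul L).div_const 2
      have := this.mul_const (‖v‖ ^ 2)
      exact this.congr_deriv (by ring)
    exact (h1.sub h2).sub h3
  have hanti : AntitoneOn φ (Set.Icc 0 1) := by
    apply antitoneOn_of_deriv_nonpos (convex_Icc 0 1)
    · exact (fun t _ => (hder t).differentiableAt.continuousAt.continuousWithinAt)
    · intro t ht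
      exact (hder t).differentiableAt.differentiableWithinAt
    · intro t ht
      rw [interior_Icc] at ht
      rw [(hder t).deriv]
      have key : ⟪gradient F (x + t • v) - gradient F x, v⟫ ≤ L * t * ‖v‖ ^ 2 := by
        calc ⟪gradient F (x + t • v) - gradient F x, v⟫
            ≤ ‖gradient F (x + t • v) - gradient F x‖ * ‖v‖ := real_inner_le_norm _ _
          _ ≤ (L * ‖(x + t • v) - x‖) * ‖v‖ := by
              gcongr; exact hLip _ _
          _ = L * t * ‖v‖ ^ 2 := by
              simp [norm_smul, abs_of_nonneg ht.1.le]; ring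
      have := inner_sub_left (𝕜 := ℝ) (gradient F (x + t • v)) (gradient F x) v
      linarith [key, this.symm.le, this.le]
  have h01 := hanti (Set.left_mem_Icc.2 zero_le_one) (Set.right_mem_Icc.2 zero_le_one) zero_le_one
  simp only [hφ, zero_smul, add_zero, one_smul, zero_mul, sub_zero, one_pow, mul_one] at h01
  nlinarith [h01]

lemma descent_abs {E : Type*} [NormedAddCommGroup E] [InnerProductSpace ℝ E]
    [CompleteSpace E]
    (F : E → ℝ) (hF : Differentiable ℝ F) (L : ℝ) (hL0 : 0 ≤ L)
    (hLip : ∀ x y, ‖gradient F x - gradient F y‖ ≤ L * ‖x - y‖) (x v : E) :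
    |F (x + v) - F x - ⟪gradient F x, v⟫| ≤ 3 * L / 2 * ‖v‖ ^ 2 := by
  have hup := descent_lemma F hF L hLip x v
  have hdown := descent_lemma F hF L hLip (x + v) (-v)
  simp only [add_neg_cancel_right] at hdown
  have hcs : |⟪gradient F (x + v) - gradient F x, v⟫| ≤ L * ‖v‖ ^ 2 := by
    calc |⟪gradient F (x + v) - gradient F x, v⟫|
        ≤ ‖gradient F (x + v) - gradient F x‖ * ‖v‖ := abs_real_inner_le_norm _ _
      _ ≤ (L * ‖(x + v) - x‖) * ‖v‖ :=
          mul_le_mul_of_nonneg_right (hLip _ _) (norm_nonneg v)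
      _ = L * ‖v‖ ^ 2 := by simp; ring
  have hsub := inner_sub_left (𝕜 := ℝ) (gradient F (x + v)) (gradient F x) v
  have hnegv : ⟪gradient F (x + v), -v⟫ = -⟪gradient F (x + v), v⟫ := inner_neg_right _ _
  rw [hnegv] at hdown
  have h1 : F (x + v) - F x - ⟪gradient F x, v⟫ ≤ L / 2 * ‖v‖ ^ 2 := by linarith
  have h2 : -(3 * L / 2 * ‖v‖ ^ 2) ≤ F (x + v) - F x - ⟪gradient F x, v⟫ := by
    have := abs_le.1 hcs
    simp only [norm_neg] at hdown
    nlinarith [this.1, this.2]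
  rw [abs_le]
  constructor <;> nlinarith [sq_nonneg ‖v‖]

set_option maxHeartbeats 1000000 in
/-- single-step descent inequality for SGD with a biased gradient
estimate `g = ∇F(θ) + r + b⃗` where `E[r] = 0`, `E[‖r‖²] ≤ σ²` and `‖b⃗‖ ≤ β`:
the next iterate `θ⁺ = θ − α • g` satisfies
`E[F(θ⁺)] ≤ F(θ) − (α/2)(1 − 2αL)‖∇F(θ)‖² + (α/2)β² + (Lα²/2)(σ² + 2β²)`. -/
theorem biased_sgd_one_step_descent
    (p : ℕ) (hp : 0 < p)
    {Ω : Type*} [MeasurableSpace Ω] (μ : Measure Ω) [IsProbabilityMeasure μ]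
    (L : ℝ) (hL : 0 < L)
    (F : EuclideanSpace ℝ (Fin p) → ℝ) (hF : Differentiable ℝ F)
    (hLip : ∀ x y, ‖gradient F x - gradient F y‖ ≤ L * ‖x - y‖)
    (θ bvec : EuclideanSpace ℝ (Fin p)) (β : ℝ) (hβ : 0 ≤ β) (hbβ : ‖bvec‖ ≤ β)
    (r : Ω → EuclideanSpace ℝ (Fin p))
    (hrint : Integrable r μ)
    (hrsq : Integrable (fun ω => ‖r ω‖ ^ 2) μ)
    (hrmean : ∫ ω, r ω ∂μ = 0)
    (σ : ℝ) (hrvar : ∫ ω, ‖r ω‖ ^ 2 ∂μ ≤ σ ^ 2)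
    (α : ℝ) (hα : 0 < α) :
    Integrable (fun ω => F (θ - α • (gradient F θ + r ω + bvec))) μ ∧
    ∫ ω, F (θ - α • (gradient F θ + r ω + bvec)) ∂μ
      ≤ F θ - (α / 2) * (1 - 2 * α * L) * ‖gradient F θ‖ ^ 2
        + (α / 2) * β ^ 2 + (L * α ^ 2 / 2) * (σ ^ 2 + 2 * β ^ 2) := by
  set g := gradient F θ with hg
  set c := g + bvec with hc
  have hrearr : ∀ ω, θ - α • (g + r ω + bvec) = θ + (-(α • (c + r ω))) := by
    intro ω
    rw [sub_eq_add_neg]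
    congr 2
    module
  -- pointwise bounds
  have hvnorm : ∀ ω, ‖-(α • (c + r ω))‖ ^ 2 = α ^ 2 * ‖c + r ω‖ ^ 2 := by
    intro ω
    rw [norm_neg, norm_smul]
    simp [abs_of_pos hα]
    ring
  have hinner : ∀ ω, ⟪g, -(α • (c + r ω))⟫ = -α * (⟪g, c⟫ + ⟪g, r ω⟫) := by
    intro ω
    rw [inner_neg_right, inner_smul_right, inner_add_right]
    ring
  have hexpand : ∀ ω, ‖c + r ω‖ ^ 2 = ‖c‖ ^ 2 + 2 * ⟪c, r ω⟫ + ‖r ω‖ ^ 2 := by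
    intro ω
    exact norm_add_sq_real c (r ω)
  -- the dominating upper bound function
  set B : Ω → ℝ := fun ω => F θ - α * ⟪g, c⟫ - α * ⟪g, r ω⟫
    + L * α ^ 2 / 2 * ‖c‖ ^ 2 + L * α ^ 2 * ⟪c, r ω⟫ + L * α ^ 2 / 2 * ‖r ω‖ ^ 2 with hB
  have hFleB : ∀ ω, F (θ - α • (g + r ω + bvec)) ≤ B ω := by
    intro ω
    rw [hrearr ω]
    have := descent_lemma F hF L hLip θ (-(α • (c + r ω)))
    rw [hvnorm ω, hinner ω, hexpand ω] at this
    calc F (θ + -(α • (c + r ω))) ≤ _ := this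
      _ = B ω := by simp only [hB]; ring
  -- integrability pieces
  have hig : Integrable (fun ω => ⟪g, r ω⟫) μ := hrint.const_inner g
  have hic : Integrable (fun ω => ⟪c, r ω⟫) μ := hrint.const_inner c
  have i1 : Integrable (fun ω => F θ - α * ⟪g, c⟫ - α * ⟪g, r ω⟫) μ :=
    (integrable_const _).sub (hig.const_mul α)
  have i2 : Integrable (fun ω => F θ - α * ⟪g, c⟫ - α * ⟪g, r ω⟫
      + L * α ^ 2 / 2 * ‖c‖ ^ 2) μ := i1.add (integrable_const _)
  have i3 : Integrable (fun ω => F θ - α * ⟪g, c⟫ - α * ⟪g, r ω⟫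
      + L * α ^ 2 / 2 * ‖c‖ ^ 2 + L * α ^ 2 * ⟪c, r ω⟫) μ := i2.add (hic.const_mul _)
  have hiB : Integrable B μ := i3.add (hrsq.const_mul _)
  -- integrability of the target
  have hrmeas : AEStronglyMeasurable r μ := hrint.aestronglyMeasurable
  have hmeas : AEStronglyMeasurable (fun ω => F (θ - α • (g + r ω + bvec))) μ := by
    have hc1 : Continuous fun y : EuclideanSpace ℝ (Fin p) =>
        θ - α • (g + y + bvec) := by fun_prop
    exact (hF.continuous.comp hc1).comp_aestronglyMeasurable hrmeas
  have habs : ∀ ω, |F (θ - α • (g + r ω + bvec))| ≤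
      |F θ| + ‖g‖ * α * (‖c‖ + ‖r ω‖) +
        3 * L / 2 * α ^ 2 * (‖c‖ + ‖r ω‖) ^ 2 := by
    intro ω
    rw [hrearr ω]
    have h1 := descent_abs F hF L hL.le hLip θ (-(α • (c + r ω)))
    rw [hvnorm ω, ← hg] at h1
    have h1' := abs_le.1 h1
    have h2 : |⟪g, -(α • (c + r ω))⟫| ≤ ‖g‖ * α * (‖c‖ + ‖r ω‖) := by
      calc |⟪g, -(α • (c + r ω))⟫| ≤ ‖g‖ * ‖-(α • (c + r ω))‖ := abs_real_inner_le_norm _ _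
        _ ≤ ‖g‖ * (α * (‖c‖ + ‖r ω‖)) := by
            gcongr
            rw [norm_neg, norm_smul]
            simp [abs_of_pos hα]
            gcongr
            exact norm_add_le _ _
        _ = ‖g‖ * α * (‖c‖ + ‖r ω‖) := by ring
    have h2' := abs_le.1 h2
    have hn : ‖c + r ω‖ ^ 2 ≤ (‖c‖ + ‖r ω‖) ^ 2 := by
      have := norm_add_le c (r ω)
      nlinarith [norm_nonneg (c + r ω)]
    have hmul : 3 * L / 2 * (α ^ 2 * ‖c + r ω‖ ^ 2) ≤ 3 * L / 2 * α ^ 2 * (‖c‖ + ‖r ω‖) ^ 2 := by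
      have h0 : (0:ℝ) ≤ 3 * L / 2 * α ^ 2 := by positivity
      calc 3 * L / 2 * (α ^ 2 * ‖c + r ω‖ ^ 2) = 3 * L / 2 * α ^ 2 * ‖c + r ω‖ ^ 2 := by ring
        _ ≤ 3 * L / 2 * α ^ 2 * (‖c‖ + ‖r ω‖) ^ 2 := mul_le_mul_of_nonneg_left hn h0
    have hmul0 : (0:ℝ) ≤ 3 * L / 2 * (α ^ 2 * ‖c + r ω‖ ^ 2) := by positivity
    rw [abs_le]
    constructor <;> linarith [le_abs_self (F θ), neg_abs_le (F θ), h1'.1, h1'.2, h2'.1, h2'.2]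
  have hdom : Integrable (fun ω => |F θ| + ‖g‖ * α * (‖c‖ + ‖r ω‖) +
      3 * L / 2 * α ^ 2 * (‖c‖ + ‖r ω‖) ^ 2) μ := by
    have h1 : Integrable (fun ω => ‖r ω‖) μ := hrint.norm
    have h2 : Integrable (fun ω => (‖c‖ + ‖r ω‖) ^ 2) μ := by
      have : (fun ω => (‖c‖ + ‖r ω‖) ^ 2) =
          fun ω => ‖c‖ ^ 2 + 2 * ‖c‖ * ‖r ω‖ + ‖r ω‖ ^ 2 := by
        funext ω; ring
      rw [this]
      exact (((integrable_const _).add (h1.const_mul _)).add hrsq)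
    exact (((integrable_const _).add (((integrable_const _).add h1).const_mul _)).add
      (h2.const_mul _))
  have hint : Integrable (fun ω => F (θ - α • (g + r ω + bvec))) μ := by
    apply Integrable.mono' hdom hmeas
    filter_upwards with ω
    rw [Real.norm_eq_abs]
    exact habs ω
  refine ⟨hint, ?_⟩
  -- integral of B
  have hintB : ∫ ω, B ω ∂μ = F θ - α * ⟪g, c⟫ + L * α ^ 2 / 2 * ‖c‖ ^ 2
      + L * α ^ 2 / 2 * ∫ ω, ‖r ω‖ ^ 2 ∂μ := by
    have e1 : ∫ ω, ⟪g, r ω⟫ ∂μ = (0:ℝ) := by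
      rw [integral_inner hrint]
      rw [hrmean]
      exact inner_zero_right g
    have e2 : ∫ ω, ⟪c, r ω⟫ ∂μ = (0:ℝ) := by
      rw [integral_inner hrint, hrmean]
      exact inner_zero_right c
    rw [hB]
    rw [integral_add i3 (hrsq.const_mul _)]
    rw [integral_add i2 (hic.const_mul _)]
    rw [integral_add i1 (integrable_const _)]
    rw [integral_sub (integrable_const _) (hig.const_mul _)]
    rw [integral_const_mul, integral_const_mul, integral_const_mul, e1, e2, integral_const_mul, integral_const]
    simp [measure_univ]
  have hle : ∫ ω, F (θ - α • (g + r ω + bvec)) ∂μ ≤ ∫ ω, B ω ∂μ :=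
    integral_mono hint hiB hFleB
  rw [hintB] at hle
  -- final arithmetic
  have hgc : ⟪g, c⟫ = ‖g‖ ^ 2 + ⟪g, bvec⟫ := by
    rw [hc, inner_add_right, real_inner_self_eq_norm_sq]
  have hgb : -(‖g‖ * β) ≤ ⟪g, bvec⟫ := by
    have := abs_real_inner_le_norm g bvec
    have h2 : ‖g‖ * ‖bvec‖ ≤ ‖g‖ * β := by gcongr
    have := abs_le.1 this
    linarith [this.1]
  have hcsq : ‖c‖ ^ 2 ≤ 2 * ‖g‖ ^ 2 + 2 * β ^ 2 := by
    have h1 : ‖c‖ ≤ ‖g‖ + β := le_trans (norm_add_le g bvec) (by linarith)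
    nlinarith [norm_nonneg c, norm_nonneg g, sq_nonneg (‖g‖ - β),
      mul_self_le_mul_self (norm_nonneg c) h1]
  have hvar := hrvar
  calc ∫ ω, F (θ - α • (g + r ω + bvec)) ∂μ
      ≤ F θ - α * ⟪g, c⟫ + L * α ^ 2 / 2 * ‖c‖ ^ 2 + L * α ^ 2 / 2 * ∫ ω, ‖r ω‖ ^ 2 ∂μ := hle
    _ ≤ F θ - (α / 2) * (1 - 2 * α * L) * ‖g‖ ^ 2 + (α / 2) * β ^ 2
        + (L * α ^ 2 / 2) * (σ ^ 2 + 2 * β ^ 2) := by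
        rw [hgc]
        nlinarith [sq_nonneg (‖g‖ - β), mul_pos hL (mul_pos hα hα), hα.le, hL.le,
          mul_nonneg (mul_nonneg hL.le (sq_nonneg α)) (sq_nonneg β)]
end

section
/- Let p be a positive natural number, E := EuclideanSpace ℝ (Fin p), and let (Ω, 𝒜, μ) be a probability space with a filtration (ℱ_k)_{k∈ℕ}. Let L, σ > 0 and β ≥ 0, let F : E → ℝ be differentiable with L-Lipschitz gradient and bounded below by F* ∈ ℝ, and let θ_0 ∈ E be deterministic. Suppose random sequences θ_k, r_k, b_k : Ω → E and positive stepsizes α_k satisfy: θ_{k+1} = θ_k − α_k • (∇F(θ_k) + r_k + b_k); θ_k and b_k are ℱ_k-measurable; r_k is ℱ_{k+1}-measurable, integrable with square-integrable norm; E[r_k | ℱ_k] = 0 almost surely; E[‖r_k‖² | ℱ_k] ≤ σ² almost surely; and ‖b_k‖ ≤ β almost surely; moreover each θ_k has square-integrable norm and F(θ_k) is integrable. Then for every K ≥ 1: Σ_{k=0}^{K−1} (α_k/2)·(1 − 2·α_k·L)·E[‖∇F(θ_k)‖²] ≤ F(θ_0) − F* + (L/2)·(σ² + 2·β²)·Σ_{k=0}^{K−1}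 α_k² + (β²/2)·Σ_{k=0}^{K−1} α_k. -/
open MeasureTheory
open scoped InnerProductSpace

set_option maxHeartbeats 2000000

lemma my_descent {p : ℕ} {F : EuclideanSpace ℝ (Fin p) → ℝ} (hF : Differentiable ℝ F)
    {L : ℝ} (hL : 0 ≤ L)
    (hLip : ∀ x y, ‖gradient F x - gradient F y‖ ≤ L * ‖x - y‖)
    (x y : EuclideanSpace ℝ (Fin p)) :
    F y ≤ F x + ⟪gradient F x, y - x⟫_ℝ + L / 2 * ‖y - x‖ ^ 2 := by
  set v := y - x with hv
  have hgc : Continuous (gradient F) := by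
    refine (LipschitzWith.of_dist_le_mul (K := Real.toNNReal L) (fun a b => ?_)).continuous
    rw [dist_eq_norm, dist_eq_norm]
    simpa [Real.coe_toNNReal L hL] using hLip a b
  have hline : ∀ t : ℝ, HasDerivAt (fun t : ℝ => x + t • v) v t := by
    intro t
    simpa using ((hasDerivAt_id t).smul_const v).const_add x
  have hφ : ∀ t : ℝ, HasDerivAt (fun t : ℝ => F (x + t • v))
      ⟪gradient F (x + t • v), v⟫_ℝ t := by
    intro t
    have h1 := ((hF (x + t • v)).hasGradientAt.hasFDerivAt).comp_hasDerivAt t (hline t)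
    simpa [InnerProductSpace.toDual_apply_apply, Function.comp_def] using h1
  have hcont : Continuous fun t : ℝ => ⟪gradient F (x + t • v), v⟫_ℝ := by
    exact (hgc.comp (continuous_const.add (continuous_id.smul continuous_const))).inner
      continuous_const
  have hFTC : ∫ t in (0:ℝ)..1, ⟪gradient F (x + t • v), v⟫_ℝ = F y - F x := by
    rw [intervalIntegral.integral_eq_sub_of_hasDerivAt (fun t _ => hφ t)
      (hcont.intervalIntegrable 0 1)]
    simp [hv]
  have hmono : ∫ t in (0:ℝ)..1, ⟪gradient F (x + t • v), v⟫_ℝ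
      ≤ ∫ t in (0:ℝ)..1, (⟪gradient F x, v⟫_ℝ + L * t * ‖v‖ ^ 2) := by
    refine intervalIntegral.integral_mono_on zero_le_one (hcont.intervalIntegrable 0 1)
      (Continuous.intervalIntegrable (continuous_const.add ((continuous_const.mul continuous_id).mul continuous_const)) 0 1) (fun t ht => ?_)
    have h1 : ⟪gradient F (x + t • v) - gradient F x, v⟫_ℝ ≤ L * t * ‖v‖ ^ 2 := by
      calc ⟪gradient F (x + t • v) - gradient F x, v⟫_ℝ
          ≤ ‖gradient F (x + t • v) - gradient F x‖ * ‖v‖ := real_inner_le_norm _ _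
        _ ≤ (L * ‖(x + t • v) - x‖) * ‖v‖ := by
            have := hLip (x + t • v) x
            nlinarith [norm_nonneg v]
        _ = L * t * ‖v‖ ^ 2 := by
            rw [add_sub_cancel_left, norm_smul]
            simp [Real.norm_eq_abs, abs_of_nonneg ht.1]
            ring
    have h2 : ⟪gradient F (x + t • v), v⟫_ℝ
        = ⟪gradient F x, v⟫_ℝ + ⟪gradient F (x + t • v) - gradient F x, v⟫_ℝ := by
      rw [← inner_add_left, add_sub_cancel]
    linarith
  have hval : ∫ t in (0:ℝ)..1, (⟪gradient F x, v⟫_ℝ + L * t * ‖v‖ ^ 2)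
      = ⟪gradient F x, v⟫_ℝ + L / 2 * ‖v‖ ^ 2 := by
    rw [intervalIntegral.integral_add (intervalIntegrable_const)
      (Continuous.intervalIntegrable (show Continuous fun t : ℝ => L * t * ‖v‖ ^ 2 by fun_prop) 0 1)]
    simp only [intervalIntegral.integral_const, smul_eq_mul]
    have : ∫ t in (0:ℝ)..1, L * t * ‖v‖ ^ 2 = L / 2 * ‖v‖ ^ 2 := by
      have : (fun t : ℝ => L * t * ‖v‖ ^ 2) = fun t : ℝ => (L * ‖v‖ ^ 2) * t := by
        ext t; ring
      rw [this, intervalIntegral.integral_const_mul, integral_id]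
      ring
    rw [this]; ring
  linarith [hFTC ▸ (hmono.trans_eq hval)]


lemma my_abs_coord_le {p : ℕ} (x : EuclideanSpace ℝ (Fin p)) (i : Fin p) : |x i| ≤ ‖x‖ := by
  rw [EuclideanSpace.norm_eq]
  calc |x i| = Real.sqrt (‖x i‖ ^ 2) := by
        rw [Real.sqrt_sq (norm_nonneg _), Real.norm_eq_abs]
    _ ≤ Real.sqrt (∑ j, ‖x j‖ ^ 2) := Real.sqrt_le_sqrt
        (Finset.single_le_sum (fun j _ => sq_nonneg ‖x j‖) (Finset.mem_univ i))

lemma my_condexp_coord_zero {Ω : Type*} {m mΩ : MeasurableSpace Ω} {μ : Measure Ω}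
    [IsProbabilityMeasure μ] (hm : m ≤ mΩ)
    {p : ℕ} {r : Ω → EuclideanSpace ℝ (Fin p)} (hr : Integrable r μ)
    (hrc : μ[r|m] =ᵐ[μ] 0) (i : Fin p) :
    μ[fun ω => r ω i | m] =ᵐ[μ] 0 := by
  haveI : SigmaFinite (μ.trim hm) := inferInstance
  have hri : Integrable (fun ω => r ω i) μ :=
    (ContinuousLinearMap.integrable_comp (EuclideanSpace.proj (𝕜 := ℝ) i) hr).congr
      (Filter.Eventually.of_forall fun ω => by simp [PiLp.proj_apply])
  refine (ae_eq_condExp_of_forall_setIntegral_eq hm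
    hri (fun s _ _ => ?_) (fun s hs _ => ?_) ?_).symm
  · exact (integrable_zero _ _ μ).integrableOn
  · have h1 : ∫ ω in s, r ω ∂μ = 0 := by
      rw [← setIntegral_condExp (μ := μ) hm hr hs]
      have h0 : (μ[r|m]) =ᵐ[μ.restrict s] 0 := ae_restrict_of_ae hrc
      rw [integral_congr_ae h0]; simp
    have h2 := ContinuousLinearMap.integral_comp_comm (μ := μ.restrict s)
      (EuclideanSpace.proj (𝕜 := ℝ) i) hr.integrableOn
    simp only [PiLp.proj_apply] at h2
    rw [h2, h1]
    simp
  · exact StronglyMeasurable.aestronglyMeasurable stronglyMeasurable_zero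

lemma my_integral_inner_zero {Ω : Type*} {m mΩ : MeasurableSpace Ω} {μ : Measure Ω}
    [IsProbabilityMeasure μ] (hm : m ≤ mΩ)
    {p : ℕ} {g r : Ω → EuclideanSpace ℝ (Fin p)}
    (hg : StronglyMeasurable[m] g) (hgsq : Integrable (fun ω => ‖g ω‖ ^ 2) μ)
    (hr : Integrable r μ) (hrsq : Integrable (fun ω => ‖r ω‖ ^ 2) μ)
    (hrc : μ[r|m] =ᵐ[μ] 0) :
    ∫ ω, ⟪g ω, r ω⟫_ℝ ∂μ = 0 := by
  haveI : SigmaFinite (μ.trim hm) := inferInstance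
  have hgm : AEStronglyMeasurable g μ := (hg.mono hm).aestronglyMeasurable
  have hgim : ∀ i : Fin p, AEStronglyMeasurable (fun ω => g ω i) μ := fun i =>
    (EuclideanSpace.proj i).continuous.comp_aestronglyMeasurable hgm
  have hrim : ∀ i : Fin p, AEStronglyMeasurable (fun ω => r ω i) μ := fun i =>
    (EuclideanSpace.proj i).continuous.comp_aestronglyMeasurable hr.1
  have hcoord_int : ∀ i : Fin p, Integrable (fun ω => g ω i * r ω i) μ := by
    intro i
    refine Integrable.mono' ((hgsq.add hrsq).div_const 2) ((hgim i).mul (hrim i)) ?_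
    refine Filter.Eventually.of_forall fun ω => ?_
    have h1 := my_abs_coord_le (g ω) i
    have h2 := my_abs_coord_le (r ω) i
    have h3 : ‖g ω i * r ω i‖ = |g ω i| * |r ω i| := by rw [Real.norm_eq_abs, abs_mul]
    rw [h3]
    simp only [Pi.add_apply]
    nlinarith [abs_nonneg (g ω i), abs_nonneg (r ω i), norm_nonneg (g ω), norm_nonneg (r ω),
      sq_nonneg (‖g ω‖ - ‖r ω‖)]
  have hinner : ∀ ω, ⟪g ω, r ω⟫_ℝ = ∑ i, g ω i * r ω i := fun ω => by
    simp [PiLp.inner_apply, RCLike.inner_apply, mul_comm]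
  calc ∫ ω, ⟪g ω, r ω⟫_ℝ ∂μ = ∑ i, ∫ ω, g ω i * r ω i ∂μ := by
        simp_rw [hinner]; exact integral_finset_sum _ (fun i _ => hcoord_int i)
    _ = 0 := by
        refine Finset.sum_eq_zero fun i _ => ?_
        have hgi : StronglyMeasurable[m] (fun ω => g ω i) :=
          (EuclideanSpace.proj i).continuous.comp_stronglyMeasurable hg
        have hri : Integrable (fun ω => r ω i) μ :=
          (ContinuousLinearMap.integrable_comp (EuclideanSpace.proj (𝕜 := ℝ) i) hr).congr
            (Filter.Eventually.of_forall fun ω => by simp [PiLp.proj_apply])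
        have hpull := condExp_mul_of_stronglyMeasurable_left (μ := μ) hgi
          (show Integrable ((fun ω => g ω i) * fun ω => r ω i) μ from hcoord_int i) hri
        have hz := my_condexp_coord_zero hm hr hrc i
        have : μ[(fun ω => g ω i) * fun ω => r ω i|m] =ᵐ[μ] 0 := by
          refine hpull.trans ?_
          filter_upwards [hz] with ω hω
          simp [hω]
        calc ∫ ω, g ω i * r ω i ∂μ
            = ∫ ω, (μ[(fun ω => g ω i) * fun ω => r ω i|m]) ω ∂μ := (integral_condExp hm).symm
          _ = 0 := by rw [integral_congr_ae this]; simp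


/-- summed descent inequality for stochastic approximation with a biased
gradient oracle. At each step the gradient estimate is `∇F(θ_k) + r_k + b_k`, where
`r_k` is conditionally mean-zero with conditional second moment at most `σ²` and the
bias `b_k` satisfies `‖b_k‖ ≤ β` almost surely. Then for every `K ≥ 1`,
`Σ_{k<K} (α_k/2)(1 − 2α_kL)·E‖∇F(θ_k)‖² ≤ F(θ_0) − F* + (L/2)(σ² + 2β²)Σα_k² + (β²/2)Σα_k`. -/
theorem biased_sa_summed_descent
    (p : ℕ) (hp : 0 < p)
    {Ω : Type*} {mΩ : MeasurableSpace Ω} {μ : Measure Ω} [IsProbabilityMeasure μ]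
    (ℱ : Filtration ℕ mΩ)
    (L σ β : ℝ) (hL : 0 < L) (hσ : 0 < σ) (hβ : 0 ≤ β)
    (F : EuclideanSpace ℝ (Fin p) → ℝ) (Fstar : ℝ)
    (hF : Differentiable ℝ F)
    (hLip : ∀ x y, ‖gradient F x - gradient F y‖ ≤ L * ‖x - y‖)
    (hFlb : ∀ x, Fstar ≤ F x)
    (θ r b : ℕ → Ω → EuclideanSpace ℝ (Fin p))
    (α : ℕ → ℝ) (hα : ∀ k, 0 < α k)
    (θ0 : EuclideanSpace ℝ (Fin p)) (hθ0 : ∀ ω, θ 0 ω = θ0)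
    (hrec : ∀ k ω, θ (k + 1) ω = θ k ω - α k • (gradient F (θ k ω) + r k ω + b k ω))
    (hθmeas : ∀ k, StronglyMeasurable[ℱ k] (θ k))
    (hbmeas : ∀ k, StronglyMeasurable[ℱ k] (b k))
    (hrmeas : ∀ k, StronglyMeasurable[ℱ (k + 1)] (r k))
    (hrint : ∀ k, Integrable (r k) μ)
    (hrsq : ∀ k, Integrable (fun ω => ‖r k ω‖ ^ 2) μ)
    (hrcond : ∀ k, μ[r k|ℱ k] =ᵐ[μ] 0)
    (hrvar : ∀ k, ∀ᵐ ω ∂μ, (μ[fun ω' => ‖r k ω'‖ ^ 2|ℱ k]) ω ≤ σ ^ 2)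
    (hbbd : ∀ k, ∀ᵐ ω ∂μ, ‖b k ω‖ ≤ β)
    (hθsq : ∀ k, Integrable (fun ω => ‖θ k ω‖ ^ 2) μ)
    (hFint : ∀ k, Integrable (fun ω => F (θ k ω)) μ)
    (K : ℕ) (hK : 1 ≤ K) :
    ∑ k ∈ Finset.range K,
        (α k / 2) * (1 - 2 * α k * L) * ∫ ω, ‖gradient F (θ k ω)‖ ^ 2 ∂μ
      ≤ F θ0 - Fstar
        + (L / 2) * (σ ^ 2 + 2 * β ^ 2) * ∑ k ∈ Finset.range K, (α k) ^ 2
        + (β ^ 2 / 2) * ∑ k ∈ Finset.range K, α k := by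
  have hm : ∀ k, (ℱ k : MeasurableSpace Ω) ≤ mΩ := fun k => ℱ.le k
  have hgradc : Continuous (gradient F) := by
    refine (LipschitzWith.of_dist_le_mul (K := Real.toNNReal L) (fun a c => ?_)).continuous
    rw [dist_eq_norm, dist_eq_norm]
    simpa [Real.coe_toNNReal L hL.le] using hLip a c
  have hgsm : ∀ k, StronglyMeasurable[ℱ k] (fun ω => gradient F (θ k ω)) := fun k =>
    hgradc.comp_stronglyMeasurable (hθmeas k)
  have hgm : ∀ k, AEStronglyMeasurable (fun ω => gradient F (θ k ω)) μ := fun k =>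
    ((hgsm k).mono (hm k)).aestronglyMeasurable
  have hbm : ∀ k, AEStronglyMeasurable (b k) μ := fun k =>
    ((hbmeas k).mono (hm k)).aestronglyMeasurable
  have hrm : ∀ k, AEStronglyMeasurable (r k) μ := fun k => (hrint k).1
  have hgrowth : ∀ x : EuclideanSpace ℝ (Fin p), ‖gradient F x‖ ≤ ‖gradient F 0‖ + L * ‖x‖ := by
    intro x
    have h1 := hLip x 0
    have h2 := norm_sub_norm_le (gradient F x) (gradient F 0)
    simp only [sub_zero] at h1
    linarith
  have hgsq : ∀ k, Integrable (fun ω => ‖gradient F (θ k ω)‖ ^ 2) μ := by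
    intro k
    refine Integrable.mono' (((hθsq k).const_mul (2 * L ^ 2)).add
      (integrable_const (2 * ‖gradient F (0 : EuclideanSpace ℝ (Fin p))‖ ^ 2)))
      ((hgm k).norm.aemeasurable.pow_const 2).aestronglyMeasurable ?_
    refine Filter.Eventually.of_forall fun ω => ?_
    have h1 := hgrowth (θ k ω)
    simp only [Pi.add_apply, Real.norm_eq_abs]
    rw [abs_of_nonneg (sq_nonneg _)]
    nlinarith [norm_nonneg (gradient F (θ k ω)), norm_nonneg (θ k ω),
      norm_nonneg (gradient F (0 : EuclideanSpace ℝ (Fin p))), sq_nonneg (L * ‖θ k ω‖ - ‖gradient F (0 : EuclideanSpace ℝ (Fin p))‖)]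
  have hbsq : ∀ k, Integrable (fun ω => ‖b k ω‖ ^ 2) μ := by
    intro k
    refine Integrable.mono' (integrable_const (β ^ 2))
      ((hbm k).norm.aemeasurable.pow_const 2).aestronglyMeasurable ?_
    filter_upwards [hbbd k] with ω hω
    rw [Real.norm_eq_abs, abs_of_nonneg (sq_nonneg _)]
    nlinarith [norm_nonneg (b k ω)]
  -- per-step inequality
  have hstep : ∀ k,
      (α k / 2) * (1 - 2 * α k * L) * ∫ ω, ‖gradient F (θ k ω)‖ ^ 2 ∂μ
        ≤ ((∫ ω, F (θ k ω) ∂μ) - ∫ ω, F (θ (k + 1) ω) ∂μ)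
          + ((L / 2) * (σ ^ 2 + 2 * β ^ 2) * (α k) ^ 2 + (β ^ 2 / 2) * α k) := by
    intro k
    have hGnn : 0 ≤ ∫ ω, ‖gradient F (θ k ω)‖ ^ 2 ∂μ :=
      integral_nonneg fun ω => sq_nonneg _
    -- integrabilities
    have hIgr : Integrable (fun ω => ⟪gradient F (θ k ω), r k ω⟫_ℝ) μ := by
      refine Integrable.mono' (((hgsq k).add (hrsq k)).div_const 2)
        ((hgm k).inner (hrm k)) ?_
      refine Filter.Eventually.of_forall fun ω => ?_
      simp only [Pi.add_apply]
      have := abs_real_inner_le_norm (gradient F (θ k ω)) (r k ω)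
      rw [Real.norm_eq_abs]
      nlinarith [sq_nonneg (‖gradient F (θ k ω)‖ - ‖r k ω‖)]
    have hIbr : Integrable (fun ω => ⟪b k ω, r k ω⟫_ℝ) μ := by
      refine Integrable.mono' (((hbsq k).add (hrsq k)).div_const 2)
        ((hbm k).inner (hrm k)) ?_
      refine Filter.Eventually.of_forall fun ω => ?_
      simp only [Pi.add_apply]
      have := abs_real_inner_le_norm (b k ω) (r k ω)
      rw [Real.norm_eq_abs]
      nlinarith [sq_nonneg (‖b k ω‖ - ‖r k ω‖)]
    have hIgb : Integrable (fun ω => ⟪gradient F (θ k ω), b k ω⟫_ℝ) μ := by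
      refine Integrable.mono' (((hgsq k).add (hbsq k)).div_const 2)
        ((hgm k).inner (hbm k)) ?_
      refine Filter.Eventually.of_forall fun ω => ?_
      simp only [Pi.add_apply]
      have := abs_real_inner_le_norm (gradient F (θ k ω)) (b k ω)
      rw [Real.norm_eq_abs]
      nlinarith [sq_nonneg (‖gradient F (θ k ω)‖ - ‖b k ω‖)]
    have hgbsq : Integrable (fun ω => ‖gradient F (θ k ω) + b k ω‖ ^ 2) μ := by
      refine Integrable.mono' (((hgsq k).const_mul 2).add ((hbsq k).const_mul 2))
        ((((hgm k).add (hbm k)).norm.aemeasurable.pow_const 2).aestronglyMeasurable) ?_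
      refine Filter.Eventually.of_forall fun ω => ?_
      simp only [Pi.add_apply, Real.norm_eq_abs]
      rw [abs_of_nonneg (sq_nonneg _)]
      have := norm_add_le (gradient F (θ k ω)) (b k ω)
      nlinarith [norm_nonneg (gradient F (θ k ω)), norm_nonneg (b k ω),
        sq_nonneg (‖gradient F (θ k ω)‖ - ‖b k ω‖), norm_nonneg (gradient F (θ k ω) + b k ω)]
    have hIgbr : Integrable (fun ω => ⟪gradient F (θ k ω) + b k ω, r k ω⟫_ℝ) μ :=
      (hIgr.add hIbr).congr (Filter.Eventually.of_forall fun ω => by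
        simp only [Pi.add_apply]
        exact (inner_add_left _ _ _).symm)
    have hQint : Integrable (fun ω => ‖gradient F (θ k ω) + r k ω + b k ω‖ ^ 2) μ := by
      have heq : (fun ω => ‖gradient F (θ k ω) + r k ω + b k ω‖ ^ 2)
          = fun ω => ‖gradient F (θ k ω) + b k ω‖ ^ 2
              + 2 * ⟪gradient F (θ k ω) + b k ω, r k ω⟫_ℝ + ‖r k ω‖ ^ 2 := by
        funext ω
        rw [show gradient F (θ k ω) + r k ω + b k ω
            = gradient F (θ k ω) + b k ω + r k ω from by abel, norm_add_sq_real]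
      rw [heq]
      have hA : Integrable (fun ω => ‖gradient F (θ k ω) + b k ω‖ ^ 2
          + 2 * ⟪gradient F (θ k ω) + b k ω, r k ω⟫_ℝ) μ := hgbsq.add (hIgbr.const_mul 2)
      exact hA.add (hrsq k)
    have hSint : Integrable (fun ω => ⟪gradient F (θ k ω),
        gradient F (θ k ω) + r k ω + b k ω⟫_ℝ) μ := by
      have heq : (fun ω => ⟪gradient F (θ k ω), gradient F (θ k ω) + r k ω + b k ω⟫_ℝ)
          = fun ω => ‖gradient F (θ k ω)‖ ^ 2 + ⟪gradient F (θ k ω), r k ω⟫_ℝ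
              + ⟪gradient F (θ k ω), b k ω⟫_ℝ := by
        funext ω
        rw [inner_add_right, inner_add_right, real_inner_self_eq_norm_sq]
      rw [heq]
      exact ((hgsq k).add hIgr).add hIgb
    -- key zero/bound facts
    have hinner0 : ∫ ω, ⟪gradient F (θ k ω), r k ω⟫_ℝ ∂μ = 0 :=
      my_integral_inner_zero (hm k) (hgsm k) (hgsq k) (hrint k) (hrsq k) (hrcond k)
    have hinnerb0 : ∫ ω, ⟪b k ω, r k ω⟫_ℝ ∂μ = 0 :=
      my_integral_inner_zero (hm k) (hbmeas k) (hbsq k) (hrint k) (hrsq k) (hrcond k)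
    have hrsqle : ∫ ω, ‖r k ω‖ ^ 2 ∂μ ≤ σ ^ 2 := by
      haveI : SigmaFinite (μ.trim (hm k)) := inferInstance
      rw [← integral_condExp (hm k) (f := fun ω => ‖r k ω‖ ^ 2)]
      calc ∫ ω, (μ[fun ω' => ‖r k ω'‖ ^ 2|ℱ k]) ω ∂μ
          ≤ ∫ _ω, σ ^ 2 ∂μ := integral_mono_ae integrable_condExp (integrable_const _) (hrvar k)
        _ = σ ^ 2 := by simp
    -- pointwise descent
    have hpt : ∀ ω, F (θ (k + 1) ω) ≤ F (θ k ω)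
        - α k * ⟪gradient F (θ k ω), gradient F (θ k ω) + r k ω + b k ω⟫_ℝ
        + L / 2 * (α k) ^ 2 * ‖gradient F (θ k ω) + r k ω + b k ω‖ ^ 2 := by
      intro ω
      have hd := my_descent hF hL.le hLip (θ k ω) (θ (k + 1) ω)
      have hdiff : θ (k + 1) ω - θ k ω = -(α k • (gradient F (θ k ω) + r k ω + b k ω)) := by
        rw [hrec k ω]; abel
      rw [hdiff, inner_neg_right, real_inner_smul_right, norm_neg, norm_smul, mul_pow,
        Real.norm_eq_abs, sq_abs] at hd
      linarith [hd]
    -- integrate the pointwise bound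
    have hint_le : ∫ ω, F (θ (k + 1) ω) ∂μ
        ≤ (∫ ω, F (θ k ω) ∂μ)
          - α k * ∫ ω, ⟪gradient F (θ k ω), gradient F (θ k ω) + r k ω + b k ω⟫_ℝ ∂μ
          + L / 2 * (α k) ^ 2 * ∫ ω, ‖gradient F (θ k ω) + r k ω + b k ω‖ ^ 2 ∂μ := by
      have hB : Integrable (fun ω => α k * ⟪gradient F (θ k ω),
          gradient F (θ k ω) + r k ω + b k ω⟫_ℝ) μ := hSint.const_mul (α k)
      have hC : Integrable (fun ω => L / 2 * (α k) ^ 2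
          * ‖gradient F (θ k ω) + r k ω + b k ω‖ ^ 2) μ := hQint.const_mul (L / 2 * (α k) ^ 2)
      have hD : Integrable (fun ω => F (θ k ω) - α k * ⟪gradient F (θ k ω),
          gradient F (θ k ω) + r k ω + b k ω⟫_ℝ) μ := (hFint k).sub hB
      have h1 := integral_mono_ae (hFint (k + 1)) (hD.add hC)
        (Filter.Eventually.of_forall hpt)
      simp only [Pi.add_apply] at h1
      rwa [integral_add hD hC, integral_sub (hFint k) hB,
        integral_const_mul _ _, integral_const_mul _ _] at h1
    -- value of ∫ S
    have hS : ∫ ω, ⟪gradient F (θ k ω), gradient F (θ k ω) + r k ω + b k ω⟫_ℝ ∂μ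
        = (∫ ω, ‖gradient F (θ k ω)‖ ^ 2 ∂μ) + ∫ ω, ⟪gradient F (θ k ω), b k ω⟫_ℝ ∂μ := by
      have heq : (fun ω => ⟪gradient F (θ k ω), gradient F (θ k ω) + r k ω + b k ω⟫_ℝ)
          = fun ω => ‖gradient F (θ k ω)‖ ^ 2 + ⟪gradient F (θ k ω), r k ω⟫_ℝ
              + ⟪gradient F (θ k ω), b k ω⟫_ℝ := by
        funext ω
        rw [inner_add_right, inner_add_right, real_inner_self_eq_norm_sq]
      have hA : Integrable (fun ω => ‖gradient F (θ k ω)‖ ^ 2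
          + ⟪gradient F (θ k ω), r k ω⟫_ℝ) μ := (hgsq k).add hIgr
      rw [heq, integral_add hA hIgb, integral_add (hgsq k) hIgr, hinner0]
      ring
    have hSb : -(((∫ ω, ‖gradient F (θ k ω)‖ ^ 2 ∂μ) + β ^ 2) / 2)
        ≤ ∫ ω, ⟪gradient F (θ k ω), b k ω⟫_ℝ ∂μ := by
      have hptb : ∀ᵐ ω ∂μ, -((‖gradient F (θ k ω)‖ ^ 2 + β ^ 2) / 2)
          ≤ ⟪gradient F (θ k ω), b k ω⟫_ℝ := by
        filter_upwards [hbbd k] with ω hω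
        have h1 := abs_real_inner_le_norm (gradient F (θ k ω)) (b k ω)
        have h2 := abs_le.1 h1
        nlinarith [norm_nonneg (gradient F (θ k ω)), norm_nonneg (b k ω),
          sq_nonneg (‖gradient F (θ k ω)‖ - β)]
      have hAB : Integrable (fun ω => ‖gradient F (θ k ω)‖ ^ 2 + β ^ 2) μ :=
        (hgsq k).add (integrable_const (β ^ 2))
      have hABd : Integrable (fun ω => (‖gradient F (θ k ω)‖ ^ 2 + β ^ 2) / 2) μ :=
        hAB.div_const 2
      have hIbound : Integrable (fun ω => -((‖gradient F (θ k ω)‖ ^ 2 + β ^ 2) / 2)) μ :=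
        hABd.neg
      have h3 := integral_mono_ae hIbound hIgb hptb
      have h4 : ∫ ω, -((‖gradient F (θ k ω)‖ ^ 2 + β ^ 2) / 2) ∂μ
          = -(((∫ ω, ‖gradient F (θ k ω)‖ ^ 2 ∂μ) + β ^ 2) / 2) := by
        rw [integral_neg, integral_div, integral_add (hgsq k) (integrable_const (β ^ 2)),
          integral_const]
        simp
      rw [h4] at h3
      exact h3
    -- bound on ∫ Q
    have hQ : ∫ ω, ‖gradient F (θ k ω) + r k ω + b k ω‖ ^ 2 ∂μ
        ≤ 2 * (∫ ω, ‖gradient F (θ k ω)‖ ^ 2 ∂μ) + 2 * β ^ 2 + σ ^ 2 := by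
      have heq : (fun ω => ‖gradient F (θ k ω) + r k ω + b k ω‖ ^ 2)
          = fun ω => ‖gradient F (θ k ω) + b k ω‖ ^ 2
              + 2 * ⟪gradient F (θ k ω) + b k ω, r k ω⟫_ℝ + ‖r k ω‖ ^ 2 := by
        funext ω
        have h0 : gradient F (θ k ω) + r k ω + b k ω
            = (gradient F (θ k ω) + b k ω) + r k ω := by abel
        rw [h0, norm_add_sq_real]
      rw [heq]
      have hgb2 : ∫ ω, ‖gradient F (θ k ω) + b k ω‖ ^ 2 ∂μ
          ≤ 2 * (∫ ω, ‖gradient F (θ k ω)‖ ^ 2 ∂μ) + 2 * β ^ 2 := by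
        have hb2 : ∀ᵐ ω ∂μ, ‖gradient F (θ k ω) + b k ω‖ ^ 2
            ≤ 2 * ‖gradient F (θ k ω)‖ ^ 2 + 2 * β ^ 2 := by
          filter_upwards [hbbd k] with ω hω
          have h5 := norm_add_le (gradient F (θ k ω)) (b k ω)
          have h6 : ‖gradient F (θ k ω) + b k ω‖ ^ 2
              ≤ (‖gradient F (θ k ω)‖ + ‖b k ω‖) ^ 2 :=
            pow_le_pow_left₀ (norm_nonneg _) h5 2
          nlinarith [norm_nonneg (gradient F (θ k ω)), norm_nonneg (b k ω),
            sq_nonneg (‖gradient F (θ k ω)‖ - ‖b k ω‖)]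
        have hE2 : Integrable (fun ω => 2 * ‖gradient F (θ k ω)‖ ^ 2) μ :=
          (hgsq k).const_mul 2
        have h4 := integral_mono_ae hgbsq (hE2.add (integrable_const (2 * β ^ 2))) hb2
        simp only [Pi.add_apply] at h4
        rw [integral_add hE2 (integrable_const (2 * β ^ 2)),
          integral_const_mul _ _, integral_const] at h4
        simpa using h4
      have hcross0 : ∫ ω, ⟪gradient F (θ k ω) + b k ω, r k ω⟫_ℝ ∂μ = 0 := by
        have heq2 : (fun ω => ⟪gradient F (θ k ω) + b k ω, r k ω⟫_ℝ)
            = fun ω => ⟪gradient F (θ k ω), r k ω⟫_ℝ + ⟪b k ω, r k ω⟫_ℝ := by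
          funext ω
          exact inner_add_left _ _ _
        rw [heq2, integral_add hIgr hIbr, hinner0, hinnerb0, add_zero]
      have hA : Integrable (fun ω => ‖gradient F (θ k ω) + b k ω‖ ^ 2
          + 2 * ⟪gradient F (θ k ω) + b k ω, r k ω⟫_ℝ) μ := hgbsq.add (hIgbr.const_mul 2)
      rw [integral_add hA (hrsq k), integral_add hgbsq (hIgbr.const_mul 2),
        integral_const_mul _ _, hcross0]
      simp only [mul_zero, add_zero]
      linarith
    -- combine
    have hSfull : (∫ ω, ‖gradient F (θ k ω)‖ ^ 2 ∂μ) / 2 - β ^ 2 / 2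
        ≤ ∫ ω, ⟪gradient F (θ k ω), gradient F (θ k ω) + r k ω + b k ω⟫_ℝ ∂μ := by
      rw [hS]; linarith
    have hαpos := hα k
    have c1 := mul_le_mul_of_nonneg_left hQ (by positivity : (0:ℝ) ≤ L / 2 * (α k) ^ 2)
    have c2 := mul_le_mul_of_nonneg_left hSfull (le_of_lt hαpos)
    nlinarith [c1, c2, hint_le]
  -- summation
  have htel : ∑ k ∈ Finset.range K,
      (((∫ ω, F (θ k ω) ∂μ) - ∫ ω, F (θ (k + 1) ω) ∂μ)
        + ((L / 2) * (σ ^ 2 + 2 * β ^ 2) * (α k) ^ 2 + (β ^ 2 / 2) * α k))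
      = ((∫ ω, F (θ 0 ω) ∂μ) - ∫ ω, F (θ K ω) ∂μ)
        + ((L / 2) * (σ ^ 2 + 2 * β ^ 2) * ∑ k ∈ Finset.range K, (α k) ^ 2
          + (β ^ 2 / 2) * ∑ k ∈ Finset.range K, α k) := by
    rw [Finset.sum_add_distrib, Finset.sum_range_sub' (fun k => ∫ ω, F (θ k ω) ∂μ) K,
      Finset.sum_add_distrib, ← Finset.mul_sum, ← Finset.mul_sum]
  have hE0 : ∫ ω, F (θ 0 ω) ∂μ = F θ0 := by
    simp only [hθ0]
    simp
  have hEK : Fstar ≤ ∫ ω, F (θ K ω) ∂μ := by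
    calc Fstar = ∫ _ω, Fstar ∂μ := by simp
      _ ≤ ∫ ω, F (θ K ω) ∂μ := integral_mono_ae (integrable_const _) (hFint K)
          (Filter.Eventually.of_forall fun ω => hFlb (θ K ω))
  calc ∑ k ∈ Finset.range K,
        (α k / 2) * (1 - 2 * α k * L) * ∫ ω, ‖gradient F (θ k ω)‖ ^ 2 ∂μ
      ≤ ∑ k ∈ Finset.range K,
        (((∫ ω, F (θ k ω) ∂μ) - ∫ ω, F (θ (k + 1) ω) ∂μ)
          + ((L / 2) * (σ ^ 2 + 2 * β ^ 2) * (α k) ^ 2 + (β ^ 2 / 2) * α k)) :=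
        Finset.sum_le_sum fun k _ => hstep k
    _ = ((∫ ω, F (θ 0 ω) ∂μ) - ∫ ω, F (θ K ω) ∂μ)
        + ((L / 2) * (σ ^ 2 + 2 * β ^ 2) * ∑ k ∈ Finset.range K, (α k) ^ 2
          + (β ^ 2 / 2) * ∑ k ∈ Finset.range K, α k) := htel
    _ ≤ F θ0 - Fstar
        + (L / 2) * (σ ^ 2 + 2 * β ^ 2) * ∑ k ∈ Finset.range K, (α k) ^ 2
        + (β ^ 2 / 2) * ∑ k ∈ Finset.range K, α k := by
        rw [hE0]
        linarith
end

section
/- Let p be a positive natural number and E := EuclideanSpace ℝ (Fin p). Let c, B₃, b, b₀ > 0. On a probability space (Ω, μ), let Δ : Ω → E be a random vector with |1/(Δ_i)| ≤ B₃ almost surely for every coordinate i, let η¹, η² : Ω → ℝ be integrable random variables with |E[η¹ | σ(Δ)]| ≤ b and |E[η² | σ(Δ)]| ≤ b almost surely, and let ĝ : Ω → E be integrable with ‖E[ĝ] − v‖_∞ ≤ b₀·c² for some fixed vector v ∈ E (where ‖·‖_∞ denotes the supremum over coordinates of the absolute value). Define g : Ω → E coordinatewise by g_i := ĝ_i + (η¹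 − η²)/(2·c·Δ_i). Then g is integrable and ‖E[g] − v‖_∞ ≤ b₀·c² + b·B₃/c. -/
open MeasureTheory

/-- Auxiliary: pull-out bound for the integral of a product of a bounded `m`-measurable
function and an integrable function with bounded conditional bias. -/
lemma spsa_aux {Ω : Type*} [inst : MeasurableSpace Ω] (μ : Measure Ω) [IsProbabilityMeasure μ]
    {m : MeasurableSpace Ω} (hm : m ≤ inst)
    (φ η : Ω → ℝ) (hφ : StronglyMeasurable[m] φ)
    (C D : ℝ) (hD : 0 ≤ D)
    (hφb : ∀ᵐ ω ∂μ, ‖φ ω‖ ≤ C) (hη : Integrable η μ)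
    (hbias : ∀ᵐ ω ∂μ, |(μ[η|m]) ω| ≤ D) :
    Integrable (fun ω => φ ω * η ω) μ ∧ |∫ ω, φ ω * η ω ∂μ| ≤ C * D := by
  have hint : Integrable (fun ω => φ ω * η ω) μ :=
    hη.bdd_mul (hφ.mono hm).aestronglyMeasurable hφb
  refine ⟨hint, ?_⟩
  have hpull : μ[φ * η|m] =ᵐ[μ] φ * μ[η|m] :=
    condExp_stronglyMeasurable_mul_of_bound hm hφ hη C hφb
  have h1 : ∫ ω, φ ω * η ω ∂μ = ∫ ω, φ ω * (μ[η|m]) ω ∂μ := by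
    have h0 : ∫ ω, (μ[φ * η|m]) ω ∂μ = ∫ ω, φ ω * η ω ∂μ := integral_condExp hm
    rw [← h0]
    exact integral_congr_ae hpull
  rw [h1]
  have hint2 : Integrable (fun ω => φ ω * (μ[η|m]) ω) μ :=
    integrable_condExp.bdd_mul (hφ.mono hm).aestronglyMeasurable hφb
  calc |∫ ω, φ ω * (μ[η|m]) ω ∂μ| = ‖∫ ω, φ ω * (μ[η|m]) ω ∂μ‖ :=
        (Real.norm_eq_abs _).symm
  _ ≤ ∫ ω, ‖φ ω * (μ[η|m]) ω‖ ∂μ := norm_integral_le_integral_norm _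
  _ ≤ ∫ _ω, C * D ∂μ := by
      refine integral_mono_ae hint2.norm (integrable_const _) ?_
      filter_upwards [hφb, hbias] with ω h1 h2
      rw [Real.norm_eq_abs, abs_mul]
      exact mul_le_mul (by simpa using h1) h2 (abs_nonneg _)
        ((norm_nonneg (φ ω)).trans h1)
  _ = C * D := by simp

/-- bias decomposition for the SPSA gradient estimate with biased function
evaluations. If the unbiased-evaluation SPSA estimate `ghat` has coordinatewise mean
deviation from `v` at most `b₀c²`, the two systematic-noise contributions `η¹, η²` have
conditional bias (given `σ(Δ)`) at most `b`, and `|1/Δ_i| ≤ B₃` a.s., then the actual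
estimate `g_i = ghat_i + (η¹ − η²)/(2cΔ_i)` is integrable with
`‖E[g] − v‖_∞ ≤ b₀c² + bB₃/c` (coordinatewise). -/
theorem spsa_bias_decomposition
    (p : ℕ) (hp : 0 < p)
    {Ω : Type*} [MeasurableSpace Ω] (μ : Measure Ω) [IsProbabilityMeasure μ]
    (c B₃ b b₀ : ℝ) (hc : 0 < c) (hB₃ : 0 < B₃) (hb : 0 < b) (hb₀ : 0 < b₀)
    (Δ : Ω → EuclideanSpace ℝ (Fin p)) (hΔmeas : Measurable Δ)
    (hΔ : ∀ i : Fin p, ∀ᵐ ω ∂μ, |1 / Δ ω i| ≤ B₃)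
    (η₁ η₂ : Ω → ℝ) (hη₁ : Integrable η₁ μ) (hη₂ : Integrable η₂ μ)
    (hbias₁ : ∀ᵐ ω ∂μ, |(μ[η₁|MeasurableSpace.comap Δ inferInstance]) ω| ≤ b)
    (hbias₂ : ∀ᵐ ω ∂μ, |(μ[η₂|MeasurableSpace.comap Δ inferInstance]) ω| ≤ b)
    (ghat : Ω → EuclideanSpace ℝ (Fin p)) (hghatint : Integrable ghat μ)
    (v : EuclideanSpace ℝ (Fin p))
    (hghatbias : ∀ i : Fin p, |(∫ ω, ghat ω ∂μ) i - v i| ≤ b₀ * c ^ 2)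
    (g : Ω → EuclideanSpace ℝ (Fin p))
    (hg : ∀ ω (i : Fin p), g ω i = ghat ω i + (η₁ ω - η₂ ω) / (2 * c * Δ ω i)) :
    Integrable g μ ∧
    ∀ i : Fin p, |(∫ ω, g ω ∂μ) i - v i| ≤ b₀ * c ^ 2 + b * B₃ / c := by
  classical
  have hm := hΔmeas.comap_le
  set η : Ω → ℝ := fun ω => η₁ ω - η₂ ω with hηdef
  have hη : Integrable η μ := hη₁.sub hη₂
  -- bound on conditional expectation of η
  have hbiasη : ∀ᵐ ω ∂μ,
      |(μ[η|MeasurableSpace.comap Δ inferInstance]) ω| ≤ 2 * b := by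
    have hsub := condExp_sub (m := MeasurableSpace.comap Δ inferInstance) (μ := μ) hη₁ hη₂
    filter_upwards [hsub, hbias₁, hbias₂] with ω h1 h2 h3
    have h1' : (μ[η|MeasurableSpace.comap Δ inferInstance]) ω
        = (μ[η₁|MeasurableSpace.comap Δ inferInstance]) ω
          - (μ[η₂|MeasurableSpace.comap Δ inferInstance]) ω := h1
    rw [h1']
    calc |(μ[η₁|MeasurableSpace.comap Δ inferInstance]) ω
          - (μ[η₂|MeasurableSpace.comap Δ inferInstance]) ω|
        ≤ |(μ[η₁|MeasurableSpace.comap Δ inferInstance]) ω|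
          + |(μ[η₂|MeasurableSpace.comap Δ inferInstance]) ω| := abs_sub _ _
    _ ≤ b + b := add_le_add h2 h3
    _ = 2 * b := by ring
  -- the multiplier functions
  set f : Fin p → Ω → ℝ := fun i ω => (2 * c * Δ ω i)⁻¹ with hfdef
  have hΔm : Measurable[MeasurableSpace.comap Δ inferInstance] Δ := fun s hs => ⟨s, hs, rfl⟩
  have hfm : ∀ i, StronglyMeasurable[MeasurableSpace.comap Δ inferInstance] (f i) := by
    intro i
    have h1 : Measurable[MeasurableSpace.comap Δ inferInstance] fun ω => Δ ω i :=
      ((EuclideanSpace.proj i : EuclideanSpace ℝ (Fin p) →L[ℝ] ℝ).continuous.measurable).comp hΔm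
    exact ((measurable_const.mul h1).inv).stronglyMeasurable
  have hfbound : ∀ i, ∀ᵐ ω ∂μ, ‖f i ω‖ ≤ B₃ / (2 * c) := by
    intro i
    filter_upwards [hΔ i] with ω hω
    calc ‖(2 * c * Δ ω i)⁻¹‖ = (2 * c)⁻¹ * |(Δ ω i)⁻¹| := by
          rw [mul_inv, Real.norm_eq_abs, abs_mul,
            abs_of_nonneg (by positivity : (0:ℝ) ≤ (2 * c)⁻¹)]
    _ ≤ (2 * c)⁻¹ * B₃ :=
          mul_le_mul_of_nonneg_left (by simpa [one_div] using hω) (by positivity)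
    _ = B₃ / (2 * c) := by ring
  have haux := fun i => spsa_aux μ hm (f i) η (hfm i) (B₃ / (2 * c)) (2 * b)
    (by positivity) (hfbound i) hη hbiasη
  have hfηint : ∀ i, Integrable (fun ω => f i ω * η ω) μ := fun i => (haux i).1
  have hkey : ∀ i, |∫ ω, f i ω * η ω ∂μ| ≤ b * B₃ / c := by
    intro i
    refine (haux i).2.trans (le_of_eq ?_)
    field_simp
  -- integrability of g
  have hgieq : ∀ i : Fin p, (fun ω => g ω i) = fun ω => ghat ω i + f i ω * η ω := by
    intro i; funext ω
    rw [hg ω i, div_eq_inv_mul]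
  have hgw : g = fun ω => ghat ω + ∑ i : Fin p, (f i ω * η ω) • EuclideanSpace.single i (1:ℝ) := by
    funext ω
    apply PiLp.ext
    intro j
    have hsum : (∑ i : Fin p, (f i ω * η ω) • EuclideanSpace.single i (1:ℝ)) j
        = ∑ i : Fin p, (f i ω * η ω) * (if j = i then (1:ℝ) else 0) := by
      rw [WithLp.ofLp_sum, Finset.sum_apply]
      exact Finset.sum_congr rfl fun i _ => by
        simp [EuclideanSpace.single_apply]
    simp only [PiLp.add_apply, hsum, mul_ite, mul_one, mul_zero, Finset.sum_ite_eq,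
      Finset.mem_univ, if_true]
    rw [hg ω j, div_eq_inv_mul]
  have hgint : Integrable g μ := by
    rw [hgw]
    exact hghatint.add (integrable_finset_sum _ fun i _ => (hfηint i).smul_const _)
  refine ⟨hgint, fun i => ?_⟩
  have hproj : ∀ (F : Ω → EuclideanSpace ℝ (Fin p)), Integrable F μ →
      (∫ ω, F ω ∂μ) i = ∫ ω, F ω i ∂μ := fun F hF =>
    ((EuclideanSpace.proj i : EuclideanSpace ℝ (Fin p) →L[ℝ] ℝ).integral_comp_comm hF).symm
  rw [hproj g hgint]
  have hsplit : ∫ ω, g ω i ∂μ = (∫ ω, ghat ω ∂μ) i + ∫ ω, f i ω * η ω ∂μ := by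
    rw [hproj ghat hghatint]
    calc ∫ ω, g ω i ∂μ = ∫ ω, (ghat ω i + f i ω * η ω) ∂μ := by rw [← hgieq i]
    _ = ∫ ω, ghat ω i ∂μ + ∫ ω, f i ω * η ω ∂μ :=
      integral_add ((EuclideanSpace.proj i :
        EuclideanSpace ℝ (Fin p) →L[ℝ] ℝ).integrable_comp hghatint) (hfηint i)
  rw [hsplit]
  calc |(∫ ω, ghat ω ∂μ) i + ∫ ω, f i ω * η ω ∂μ - v i|
      ≤ |(∫ ω, ghat ω ∂μ) i - v i| + |∫ ω, f i ω * η ω ∂μ| := by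
        rw [add_sub_right_comm]; exact abs_add_le _ _
  _ ≤ b₀ * c ^ 2 + b * B₃ / c := add_le_add (hghatbias i) (hkey i)
end

section
/- Let p be a positive natural number, E := EuclideanSpace ℝ (Fin p), and let (Ω, 𝒜, μ) be a probability space with a filtration (ℱ_k)_{k∈ℕ}. Let L, σ, c, b, b₀, B₃ > 0, and set b̃ := b₀·c² + b·B₃/c. Let f : E → ℝ be differentiable with L-Lipschitz gradient and bounded below by f* ∈ ℝ. Fix K ≥ 1 and 0 < α ≤ 1/(4·L), and set α_k := α/√K for every k. Suppose random sequences θ_k, r_k, b_k : Ω → E satisfy: θ_0 deterministic; θ_{k+1} = θ_k − α_k • (∇f(θ_k) + r_k + b_k); θ_k and b_k are ℱ_k-measurable; r_k is ℱ_{k+1}-measurable, integrable with square-integrable norm; E[r_k | ℱ_k] = 0 a.s.; E[‖r_k‖² | ℱ_k] ≤ σ²·B₃²/c² a.s.; ‖b_k‖ ≤ b̃ a.s.; and each θ_k has square-integrable norm with f(θ_k) integrable. Then min_{0 ≤ k < K} E[‖∇f(θ_k)‖²] ≤ 4·(f(θ_0) − f*)/(α·√K) + 2·L·α·(σ²·B₃²/c²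 + 2·b̃²)/√K + 2·b̃². -/
open MeasureTheory

open RealInnerProductSpace

lemma spsa_descent {n : ℕ} {f : EuclideanSpace ℝ (Fin n) → ℝ} {L : ℝ} (hL : 0 ≤ L)
    (hf : Differentiable ℝ f)
    (hLip : ∀ x y, ‖gradient f x - gradient f y‖ ≤ L * ‖x - y‖)
    (x y : EuclideanSpace ℝ (Fin n)) :
    f y ≤ f x + ⟪gradient f x, y - x⟫ + L / 2 * ‖y - x‖ ^ 2 := by
  set v := y - x with hv
  have hgc : Continuous (gradient f) := by
    refine (LipschitzWith.of_dist_le_mul (K := L.toNNReal) ?_).continuous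
    intro a b
    simpa [dist_eq_norm, Real.coe_toNNReal L hL] using hLip a b
  set φ : ℝ → ℝ := fun t => ⟪gradient f (x + t • v), v⟫ with hφ
  have hφc : Continuous φ := by
    exact Continuous.inner (hgc.comp (continuous_const.add (continuous_id.smul continuous_const)))
      continuous_const
  have hderiv : ∀ t : ℝ, HasDerivAt (fun t : ℝ => f (x + t • v)) (φ t) t := by
    intro t
    have hc : HasDerivAt (fun t : ℝ => x + t • v) v t := by
      simpa using ((hasDerivAt_id t).smul_const v).const_add x
    have hfd : HasFDerivAt f (InnerProductSpace.toDual ℝ _ (gradient f (x + t • v)))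
        (x + t • v) := hasGradientAt_iff_hasFDerivAt.1 ((hf _).hasGradientAt)
    exact hfd.comp_hasDerivAt t hc
  have hkey : f y - f x = ∫ t in (0:ℝ)..1, φ t := by
    have := intervalIntegral.integral_eq_sub_of_hasDerivAt (f := fun t : ℝ => f (x + t • v))
      (f' := φ) (a := 0) (b := 1) (fun t _ => hderiv t)
      (hφc.intervalIntegrable 0 1)
    rw [this]
    simp [hv]
  have hφ0 : φ 0 = ⟪gradient f x, v⟫ := by simp [hφ]
  have hmono : ∫ t in (0:ℝ)..1, (φ t - φ 0) ≤ ∫ t in (0:ℝ)..1, L * ‖v‖ ^ 2 * t := by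
    refine intervalIntegral.integral_mono_on (by norm_num)
      ((hφc.sub continuous_const).intervalIntegrable 0 1)
      ((continuous_const.mul continuous_id).intervalIntegrable 0 1) ?_
    intro t ht
    rw [Set.mem_Icc] at ht
    have h1 : φ t - φ 0 = ⟪gradient f (x + t • v) - gradient f x, v⟫ := by
      rw [hφ0, hφ, inner_sub_left]
    rw [h1]
    calc ⟪gradient f (x + t • v) - gradient f x, v⟫
        ≤ ‖gradient f (x + t • v) - gradient f x‖ * ‖v‖ := real_inner_le_norm _ _
      _ ≤ (L * ‖(x + t • v) - x‖) * ‖v‖ := by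
          exact mul_le_mul_of_nonneg_right (hLip _ _) (norm_nonneg _)
      _ = L * ‖v‖ ^ 2 * t := by
          rw [add_sub_cancel_left, norm_smul, Real.norm_eq_abs, abs_of_nonneg ht.1]
          ring
  have hInt1 : ∫ t in (0:ℝ)..1, (φ t - φ 0) = (∫ t in (0:ℝ)..1, φ t) - φ 0 := by
    rw [intervalIntegral.integral_sub (hφc.intervalIntegrable 0 1)
      (intervalIntegrable_const)]
    simp
  have hInt2 : ∫ t in (0:ℝ)..1, L * ‖v‖ ^ 2 * t = L / 2 * ‖v‖ ^ 2 := by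
    rw [intervalIntegral.integral_const_mul, integral_id]
    ring
  rw [hInt1, hInt2, hφ0] at hmono
  linarith [hkey, hmono]

lemma spsa_coord_le_norm {n : ℕ} (x : EuclideanSpace ℝ (Fin n)) (i : Fin n) :
    |x i| ≤ ‖x‖ := by
  rw [EuclideanSpace.norm_eq]
  have h1 : |x i| = Real.sqrt (‖x i‖ ^ 2) := by
    rw [Real.sqrt_sq_eq_abs, Real.norm_eq_abs, abs_abs]
  rw [h1]
  apply Real.sqrt_le_sqrt
  exact Finset.single_le_sum (f := fun j => ‖x j‖ ^ 2) (fun j _ => by positivity)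
    (Finset.mem_univ i)

lemma spsa_inner_integrable {Ω : Type*} {mΩ : MeasurableSpace Ω} {μ : Measure Ω}
    [IsProbabilityMeasure μ] {n : ℕ} {X r : Ω → EuclideanSpace ℝ (Fin n)}
    (hX : AEStronglyMeasurable X μ) (hXsq : Integrable (fun ω => ‖X ω‖ ^ 2) μ)
    (hr : AEStronglyMeasurable r μ) (hrsq : Integrable (fun ω => ‖r ω‖ ^ 2) μ) :
    Integrable (fun ω => ⟪X ω, r ω⟫) μ := by
  refine Integrable.mono' (hXsq.add hrsq) (hX.inner hr) (Filter.Eventually.of_forall fun ω => ?_)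
  have h1 := abs_real_inner_le_norm (X ω) (r ω)
  have h2 : ‖X ω‖ * ‖r ω‖ ≤ ‖X ω‖ ^ 2 + ‖r ω‖ ^ 2 := by nlinarith [norm_nonneg (X ω), norm_nonneg (r ω), sq_nonneg (‖X ω‖ - ‖r ω‖)]
  rw [Real.norm_eq_abs]
  simp only [Pi.add_apply]
  linarith

lemma spsa_condexp_coord_zero {Ω : Type*} {m mΩ : MeasurableSpace Ω} (hm : m ≤ mΩ)
    {μ : Measure Ω} [IsProbabilityMeasure μ] {n : ℕ} {r : Ω → EuclideanSpace ℝ (Fin n)}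
    (hr : Integrable r μ) (hcond : μ[r|m] =ᵐ[μ] 0) (i : Fin n) :
    μ[fun ω => r ω i|m] =ᵐ[μ] 0 := by
  have hri : Integrable (fun ω => r ω i) μ := by
    have := (EuclideanSpace.proj i : EuclideanSpace ℝ (Fin n) →L[ℝ] ℝ).integrable_comp hr
    simpa using this
  refine (ae_eq_condExp_of_forall_setIntegral_eq hm hri
    (fun s _ _ => (integrable_zero _ _ _).integrableOn) (fun s hs hμs => ?_)
    ((stronglyMeasurable_zero : StronglyMeasurable[m] (0 : Ω → ℝ)).aestronglyMeasurable)).symm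
  have hr0 : ∫ ω in s, r ω ∂μ = 0 := by
    have h1 : ∫ ω in s, r ω ∂μ = ∫ ω in s, (μ[r|m]) ω ∂μ := (setIntegral_condExp hm hr hs).symm
    rw [h1]
    rw [integral_congr_ae (ae_restrict_of_ae hcond)]
    simp
  have h2 : ∫ ω in s, r ω i ∂μ = (EuclideanSpace.proj i : EuclideanSpace ℝ (Fin n) →L[ℝ] ℝ)
      (∫ ω in s, r ω ∂μ) := by
    rw [← ContinuousLinearMap.integral_comp_comm _ hr.integrableOn]
    simp
  rw [h2, hr0]
  simp

lemma spsa_integral_inner_zero {Ω : Type*} {m mΩ : MeasurableSpace Ω} (hm : m ≤ mΩ)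
    {μ : Measure Ω} [IsProbabilityMeasure μ] {n : ℕ} {X r : Ω → EuclideanSpace ℝ (Fin n)}
    (hX : StronglyMeasurable[m] X) (hXsq : Integrable (fun ω => ‖X ω‖ ^ 2) μ)
    (hr : Integrable r μ) (hrsq : Integrable (fun ω => ‖r ω‖ ^ 2) μ)
    (hcond : μ[r|m] =ᵐ[μ] 0) :
    ∫ ω, ⟪X ω, r ω⟫ ∂μ = 0 := by
  have hXm : AEStronglyMeasurable X μ := (hX.mono hm).aestronglyMeasurable
  have hinner : ∀ ω, ⟪X ω, r ω⟫ = ∑ i : Fin n, X ω i * r ω i := by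
    intro ω
    rw [PiLp.inner_apply]
    simp [RCLike.inner_apply]
    exact Finset.sum_congr rfl fun i _ => mul_comm _ _
  have hterm : ∀ i : Fin n, Integrable (fun ω => X ω i * r ω i) μ := by
    intro i
    refine Integrable.mono' (hXsq.add hrsq)
      (((EuclideanSpace.proj i : EuclideanSpace ℝ (Fin n) →L[ℝ] ℝ).continuous.comp_aestronglyMeasurable hXm).mul
        ((EuclideanSpace.proj i : EuclideanSpace ℝ (Fin n) →L[ℝ] ℝ).continuous.comp_aestronglyMeasurable
          hr.aestronglyMeasurable))
      (Filter.Eventually.of_forall fun ω => ?_)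
    have h1 := spsa_coord_le_norm (X ω) i
    have h2 := spsa_coord_le_norm (r ω) i
    have h3 : |X ω i * r ω i| = |X ω i| * |r ω i| := abs_mul _ _
    rw [Real.norm_eq_abs, h3]
    have h4 : |X ω i| * |r ω i| ≤ ‖X ω‖ * ‖r ω‖ :=
      mul_le_mul h1 h2 (abs_nonneg _) (norm_nonneg _)
    show |X ω i| * |r ω i| ≤ ‖X ω‖ ^ 2 + ‖r ω‖ ^ 2
    nlinarith [sq_nonneg (‖X ω‖ - ‖r ω‖), abs_nonneg (X ω i), abs_nonneg (r ω i)]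
  have hzero : ∀ i : Fin n, ∫ ω, X ω i * r ω i ∂μ = 0 := by
    intro i
    have hXi : StronglyMeasurable[m] (fun ω => X ω i) :=
      (EuclideanSpace.proj i : EuclideanSpace ℝ (Fin n) →L[ℝ] ℝ).continuous.comp_stronglyMeasurable hX
    have hri : Integrable (fun ω => r ω i) μ := by
      simpa using (EuclideanSpace.proj i : EuclideanSpace ℝ (Fin n) →L[ℝ] ℝ).integrable_comp hr
    have hpull := condExp_mul_of_stronglyMeasurable_left (μ := μ) hXi
      (by exact hterm i) hri
    have hcz := spsa_condexp_coord_zero hm hr hcond i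
    have hae : μ[(fun ω => X ω i) * (fun ω => r ω i)|m] =ᵐ[μ] 0 := by
      refine hpull.trans ?_
      filter_upwards [hcz] with ω hω
      simp [Pi.mul_apply, hω]
    have hic := integral_condExp (μ := μ) (f := (fun ω => X ω i) * (fun ω => r ω i)) hm
    have hre : ∫ ω, X ω i * r ω i ∂μ
        = ∫ ω, (μ[(fun ω => X ω i) * (fun ω => r ω i)|m]) ω ∂μ := by
      rw [hic]; rfl
    rw [hre]
    calc ∫ ω, (μ[(fun ω => X ω i) * (fun ω => r ω i)|m]) ω ∂μ = ∫ ω, (0:ℝ) ∂μ :=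
          integral_congr_ae hae
      _ = 0 := by simp
  calc ∫ ω, ⟪X ω, r ω⟫ ∂μ = ∫ ω, ∑ i : Fin n, X ω i * r ω i ∂μ := by
        simp_rw [hinner]
    _ = ∑ i : Fin n, ∫ ω, X ω i * r ω i ∂μ := integral_finset_sum _ (fun i _ => hterm i)
    _ = 0 := by simp [hzero]

set_option maxHeartbeats 2000000 in
/-- fixed-budget convergence guarantee for SPSA with biased function
evaluations. The gradient estimate decomposes as `∇f(θ_k) + r_k + b_k`, with
conditional second moment of `r_k` at most `σ²B₃²/c²` and `‖b_k‖ ≤ b̃ = b₀c² + bB₃/c`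
a.s.; with constant stepsize `α/√K`, `0 < α ≤ 1/(4L)`,
`min_{k<K} E‖∇f(θ_k)‖² ≤ 4(f(θ_0) − f*)/(α√K) + 2Lα(σ²B₃²/c² + 2b̃²)/√K + 2b̃²`. -/
theorem biased_spsa_fixed_budget
    (p : ℕ) (hp : 0 < p)
    {Ω : Type*} {mΩ : MeasurableSpace Ω} {μ : Measure Ω} [IsProbabilityMeasure μ]
    (ℱ : Filtration ℕ mΩ)
    (L σ c b b₀ B₃ : ℝ) (hL : 0 < L) (hσ : 0 < σ) (hc : 0 < c) (hb : 0 < b)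
    (hb₀ : 0 < b₀) (hB₃ : 0 < B₃)
    (f : EuclideanSpace ℝ (Fin p) → ℝ) (fstar : ℝ)
    (hf : Differentiable ℝ f)
    (hLip : ∀ x y, ‖gradient f x - gradient f y‖ ≤ L * ‖x - y‖)
    (hflb : ∀ x, fstar ≤ f x)
    (K : ℕ) (hK : 1 ≤ K)
    (α : ℝ) (hα : 0 < α) (hαL : α ≤ 1 / (4 * L))
    (θ r bk : ℕ → Ω → EuclideanSpace ℝ (Fin p))
    (θ0 : EuclideanSpace ℝ (Fin p)) (hθ0 : ∀ ω, θ 0 ω = θ0)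
    (hrec : ∀ k ω, θ (k + 1) ω = θ k ω
      - (α / Real.sqrt K) • (gradient f (θ k ω) + r k ω + bk k ω))
    (hθmeas : ∀ k, StronglyMeasurable[ℱ k] (θ k))
    (hbmeas : ∀ k, StronglyMeasurable[ℱ k] (bk k))
    (hrmeas : ∀ k, StronglyMeasurable[ℱ (k + 1)] (r k))
    (hrint : ∀ k, Integrable (r k) μ)
    (hrsq : ∀ k, Integrable (fun ω => ‖r k ω‖ ^ 2) μ)
    (hrcond : ∀ k, μ[r k|ℱ k] =ᵐ[μ] 0)
    (hrvar : ∀ k, ∀ᵐ ω ∂μ,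
      (μ[fun ω' => ‖r k ω'‖ ^ 2|ℱ k]) ω ≤ σ ^ 2 * B₃ ^ 2 / c ^ 2)
    (hbbd : ∀ k, ∀ᵐ ω ∂μ, ‖bk k ω‖ ≤ b₀ * c ^ 2 + b * B₃ / c)
    (hθsq : ∀ k, Integrable (fun ω => ‖θ k ω‖ ^ 2) μ)
    (hfint : ∀ k, Integrable (fun ω => f (θ k ω)) μ) :
    ∃ k < K, ∫ ω, ‖gradient f (θ k ω)‖ ^ 2 ∂μ
      ≤ 4 * (f θ0 - fstar) / (α * Real.sqrt K)
        + 2 * L * α * (σ ^ 2 * B₃ ^ 2 / c ^ 2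
            + 2 * (b₀ * c ^ 2 + b * B₃ / c) ^ 2) / Real.sqrt K
        + 2 * (b₀ * c ^ 2 + b * B₃ / c) ^ 2 := by
  classical
  have hKpos : (0:ℝ) < K := by exact_mod_cast Nat.lt_of_lt_of_le Nat.zero_lt_one hK
  set s : ℝ := Real.sqrt K with hsdef
  have hs0 : 0 < s := Real.sqrt_pos.2 hKpos
  have hssq : s ^ 2 = K := Real.sq_sqrt hKpos.le
  have hK1 : (1:ℝ) ≤ K := by exact_mod_cast hK
  have hs1 : 1 ≤ s := by nlinarith only [hssq, hK1, hs0]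
  set η : ℝ := α / s with hηdef
  have hη0 : 0 < η := div_pos hα hs0
  have hLα : L * α ≤ 1 / 4 := by
    have h1 : L * α ≤ L * (1 / (4 * L)) := mul_le_mul_of_nonneg_left hαL hL.le
    have h2 : L * (1 / (4 * L)) = 1 / 4 := by
      rw [mul_one_div, div_eq_div_iff (by positivity) (by norm_num)]
      ring
    linarith
  have hηα : η ≤ α := by
    rw [hηdef]
    exact div_le_self hα.le hs1
  have hLη : L * η ≤ 1 / 4 := le_trans (mul_le_mul_of_nonneg_left hηα hL.le) hLα
  set btil : ℝ := b₀ * c ^ 2 + b * B₃ / c with hbtdef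
  have hbt0 : 0 < btil :=
    add_pos (mul_pos hb₀ (pow_pos hc 2)) (div_pos (mul_pos hb hB₃) hc)
  set V : ℝ := σ ^ 2 * B₃ ^ 2 / c ^ 2 with hVdef
  have hV0 : 0 < V := div_pos (mul_pos (pow_pos hσ 2) (pow_pos hB₃ 2)) (pow_pos hc 2)
  -- measurability and integrability facts
  have hgc : Continuous (gradient f) := by
    refine (LipschitzWith.of_dist_le_mul (K := L.toNNReal) ?_).continuous
    intro a b'
    simpa [dist_eq_norm, Real.coe_toNNReal L hL.le] using hLip a b'
  have hgm : ∀ k, StronglyMeasurable[ℱ k] fun ω => gradient f (θ k ω) := fun k =>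
    hgc.comp_stronglyMeasurable (hθmeas k)
  have hnsqc : Continuous (fun v : EuclideanSpace ℝ (Fin p) => ‖v‖ ^ 2) :=
    continuous_norm.pow 2
  have hgsq : ∀ k, Integrable (fun ω => ‖gradient f (θ k ω)‖ ^ 2) μ := by
    intro k
    refine Integrable.mono' ((integrable_const (2 * ‖gradient f 0‖ ^ 2)).add
      ((hθsq k).const_mul (2 * L ^ 2)))
      (((hnsqc.comp hgc).comp_stronglyMeasurable (hθmeas k)).mono (ℱ.le k)).aestronglyMeasurable
      (Filter.Eventually.of_forall fun ω => ?_)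
    have h1 := hLip (θ k ω) 0
    rw [sub_zero] at h1
    have h2 : ‖gradient f (θ k ω)‖ - ‖gradient f 0‖ ≤ ‖gradient f (θ k ω) - gradient f 0‖ :=
      norm_sub_norm_le _ _
    show ‖‖gradient f (θ k ω)‖ ^ 2‖ ≤ 2 * ‖gradient f 0‖ ^ 2 + 2 * L ^ 2 * ‖θ k ω‖ ^ 2
    rw [Real.norm_eq_abs, abs_of_nonneg (by positivity)]
    have h3 : ‖gradient f (θ k ω)‖ ≤ ‖gradient f 0‖ + L * ‖θ k ω‖ := by linarith
    have h4 : ‖gradient f (θ k ω)‖ ^ 2 ≤ (‖gradient f 0‖ + L * ‖θ k ω‖) ^ 2 :=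
      pow_le_pow_left₀ (norm_nonneg _) h3 2
    nlinarith only [h4, sq_nonneg (‖gradient f 0‖ - L * ‖θ k ω‖)]
  have hXsq : ∀ k, Integrable (fun ω => ‖gradient f (θ k ω) + bk k ω‖ ^ 2) μ := by
    intro k
    refine Integrable.mono' (((hgsq k).const_mul 2).add (integrable_const (2 * btil ^ 2)))
      ((hnsqc.comp_stronglyMeasurable ((hgm k).add (hbmeas k))).mono (ℱ.le k)).aestronglyMeasurable
      ?_
    filter_upwards [hbbd k] with ω hbω
    have h1 := norm_add_le (gradient f (θ k ω)) (bk k ω)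
    show ‖‖gradient f (θ k ω) + bk k ω‖ ^ 2‖ ≤ 2 * ‖gradient f (θ k ω)‖ ^ 2 + 2 * btil ^ 2
    rw [Real.norm_eq_abs, abs_of_nonneg (by positivity)]
    have h4 : ‖gradient f (θ k ω) + bk k ω‖ ^ 2 ≤ (‖gradient f (θ k ω)‖ + ‖bk k ω‖) ^ 2 :=
      pow_le_pow_left₀ (norm_nonneg _) h1 2
    have h5 : ‖bk k ω‖ * ‖bk k ω‖ ≤ btil * btil := mul_self_le_mul_self (norm_nonneg _) hbω
    nlinarith only [h4, h5, sq_nonneg (‖gradient f (θ k ω)‖ - ‖bk k ω‖), norm_nonneg (bk k ω), norm_nonneg (gradient f (θ k ω))]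
  have hPzero : ∀ k, ∫ ω, ⟪gradient f (θ k ω), r k ω⟫ ∂μ = 0 := fun k =>
    spsa_integral_inner_zero (ℱ.le k) (hgm k) (hgsq k) (hrint k) (hrsq k) (hrcond k)
  have hQzero : ∀ k, ∫ ω, ⟪gradient f (θ k ω) + bk k ω, r k ω⟫ ∂μ = 0 := fun k =>
    spsa_integral_inner_zero (ℱ.le k) ((hgm k).add (hbmeas k)) (hXsq k) (hrint k) (hrsq k)
      (hrcond k)
  have hPint : ∀ k, Integrable (fun ω => ⟪gradient f (θ k ω), r k ω⟫) μ := fun k =>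
    spsa_inner_integrable (((hgm k).mono (ℱ.le k)).aestronglyMeasurable) (hgsq k)
      (hrint k).aestronglyMeasurable (hrsq k)
  have hQint : ∀ k, Integrable (fun ω => ⟪gradient f (θ k ω) + bk k ω, r k ω⟫) μ := fun k =>
    spsa_inner_integrable ((((hgm k).add (hbmeas k)).mono (ℱ.le k)).aestronglyMeasurable)
      (hXsq k) (hrint k).aestronglyMeasurable (hrsq k)
  have hRle : ∀ k, ∫ ω, ‖r k ω‖ ^ 2 ∂μ ≤ V := by
    intro k
    have h1 : ∫ ω, ‖r k ω‖ ^ 2 ∂μ = ∫ ω, (μ[fun ω' => ‖r k ω'‖ ^ 2|ℱ k]) ω ∂μ :=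
      (integral_condExp (ℱ.le k)).symm
    rw [h1]
    calc ∫ ω, (μ[fun ω' => ‖r k ω'‖ ^ 2|ℱ k]) ω ∂μ ≤ ∫ _ω, V ∂μ :=
          integral_mono_ae integrable_condExp (integrable_const V) (hrvar k)
      _ = V := by simp
  have hRpos : ∀ k, 0 ≤ ∫ ω, ‖r k ω‖ ^ 2 ∂μ := fun k =>
    integral_nonneg fun ω => by positivity
  have hGpos : ∀ k, 0 ≤ ∫ ω, ‖gradient f (θ k ω)‖ ^ 2 ∂μ := fun k =>
    integral_nonneg fun ω => by positivity
  set cst : ℝ := η * btil ^ 2 + L * η ^ 2 / 2 * (V + 2 * btil ^ 2) with hcstdef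
  clear_value s η btil V cst
  -- one-step inequality
  have hstep : ∀ k, ∫ ω, f (θ (k + 1) ω) ∂μ ≤ ∫ ω, f (θ k ω) ∂μ
      - η / 2 * ∫ ω, ‖gradient f (θ k ω)‖ ^ 2 ∂μ + cst := by
    intro k
    have hae : ∀ᵐ ω ∂μ, f (θ (k + 1) ω) ≤ f (θ k ω)
        + (-(3 * η / 4) + L * η ^ 2) * ‖gradient f (θ k ω)‖ ^ 2
        + (η * btil ^ 2 + L * η ^ 2 * btil ^ 2)
        + (-η) * ⟪gradient f (θ k ω), r k ω⟫
        + (L * η ^ 2) * ⟪gradient f (θ k ω) + bk k ω, r k ω⟫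
        + (L * η ^ 2 / 2) * ‖r k ω‖ ^ 2 := by
      filter_upwards [hbbd k] with ω hbω
      have hdesc := spsa_descent hL.le hf hLip (θ k ω) (θ (k + 1) ω)
      set g := gradient f (θ k ω) with hgdef
      set rr := r k ω with hrrdef
      set bb := bk k ω with hbbdef
      clear_value g rr bb
      have hyx : θ (k + 1) ω - θ k ω = -(η • (g + rr + bb)) := by
        rw [hrec k ω, hgdef, hrrdef, hbbdef]
        abel
      have hinner : ⟪g, θ (k + 1) ω - θ k ω⟫
          = -(η * (‖g‖ ^ 2 + ⟪g, rr⟫ + ⟪g, bb⟫)) := by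
        rw [hyx, inner_neg_right, real_inner_smul_right, inner_add_right, inner_add_right,
          real_inner_self_eq_norm_sq]
      have hnorm2 : ‖θ (k + 1) ω - θ k ω‖ ^ 2
          = η ^ 2 * (‖g + bb‖ ^ 2 + 2 * ⟪g + bb, rr⟫ + ‖rr‖ ^ 2) := by
        rw [hyx, norm_neg, norm_smul, Real.norm_eq_abs, abs_of_pos hη0, mul_pow]
        congr 1
        rw [add_right_comm g rr bb, norm_add_sq_real]
      have hS : -⟪g, bb⟫ ≤ ‖g‖ ^ 2 / 4 + btil ^ 2 := by
        have h1 := abs_real_inner_le_norm g bb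
        have h2 : -⟪g, bb⟫ ≤ ‖g‖ * ‖bb‖ := le_trans (neg_le_abs _) h1
        nlinarith only [h2, sq_nonneg (‖g‖ - 2 * btil),
          mul_le_mul_of_nonneg_left hbω (norm_nonneg g)]
      have hN : ‖g + bb‖ ^ 2 ≤ 2 * ‖g‖ ^ 2 + 2 * btil ^ 2 := by
        have h1 := norm_add_le g bb
        have h2 : ‖g + bb‖ ^ 2 ≤ (‖g‖ + ‖bb‖) ^ 2 := pow_le_pow_left₀ (norm_nonneg _) h1 2
        have h3 : ‖bb‖ * ‖bb‖ ≤ btil * btil := mul_self_le_mul_self (norm_nonneg _) hbω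
        nlinarith only [h2, h3, sq_nonneg (‖g‖ - ‖bb‖), norm_nonneg g, norm_nonneg bb]
      rw [hinner, hnorm2] at hdesc
      nlinarith only [hdesc, mul_le_mul_of_nonneg_left hS hη0.le,
        mul_le_mul_of_nonneg_left hN (show (0:ℝ) ≤ L * η ^ 2 / 2 by positivity)]
    have ha1 : Integrable (fun ω => f (θ k ω)
        + (-(3 * η / 4) + L * η ^ 2) * ‖gradient f (θ k ω)‖ ^ 2) μ :=
      (hfint k).add ((hgsq k).const_mul _)
    have ha2 : Integrable (fun ω => f (θ k ω)
        + (-(3 * η / 4) + L * η ^ 2) * ‖gradient f (θ k ω)‖ ^ 2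
        + (η * btil ^ 2 + L * η ^ 2 * btil ^ 2)) μ := ha1.add (integrable_const _)
    have ha3 : Integrable (fun ω => f (θ k ω)
        + (-(3 * η / 4) + L * η ^ 2) * ‖gradient f (θ k ω)‖ ^ 2
        + (η * btil ^ 2 + L * η ^ 2 * btil ^ 2)
        + (-η) * ⟪gradient f (θ k ω), r k ω⟫) μ := ha2.add ((hPint k).const_mul _)
    have ha4 : Integrable (fun ω => f (θ k ω)
        + (-(3 * η / 4) + L * η ^ 2) * ‖gradient f (θ k ω)‖ ^ 2
        + (η * btil ^ 2 + L * η ^ 2 * btil ^ 2)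
        + (-η) * ⟪gradient f (θ k ω), r k ω⟫
        + (L * η ^ 2) * ⟪gradient f (θ k ω) + bk k ω, r k ω⟫) μ :=
      ha3.add ((hQint k).const_mul _)
    have ha5 : Integrable (fun ω => f (θ k ω)
        + (-(3 * η / 4) + L * η ^ 2) * ‖gradient f (θ k ω)‖ ^ 2
        + (η * btil ^ 2 + L * η ^ 2 * btil ^ 2)
        + (-η) * ⟪gradient f (θ k ω), r k ω⟫
        + (L * η ^ 2) * ⟪gradient f (θ k ω) + bk k ω, r k ω⟫
        + (L * η ^ 2 / 2) * ‖r k ω‖ ^ 2) μ := ha4.add ((hrsq k).const_mul _)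
    have hle := integral_mono_ae (hfint (k + 1)) ha5 hae
    have hcalc : ∫ ω, (f (θ k ω)
        + (-(3 * η / 4) + L * η ^ 2) * ‖gradient f (θ k ω)‖ ^ 2
        + (η * btil ^ 2 + L * η ^ 2 * btil ^ 2)
        + (-η) * ⟪gradient f (θ k ω), r k ω⟫
        + (L * η ^ 2) * ⟪gradient f (θ k ω) + bk k ω, r k ω⟫
        + (L * η ^ 2 / 2) * ‖r k ω‖ ^ 2) ∂μ
        = (∫ ω, f (θ k ω) ∂μ)
          + (-(3 * η / 4) + L * η ^ 2) * ∫ ω, ‖gradient f (θ k ω)‖ ^ 2 ∂μ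
          + (η * btil ^ 2 + L * η ^ 2 * btil ^ 2)
          + (L * η ^ 2 / 2) * ∫ ω, ‖r k ω‖ ^ 2 ∂μ := by
      rw [integral_add ha4 ((hrsq k).const_mul _), integral_add ha3 ((hQint k).const_mul _),
        integral_add ha2 ((hPint k).const_mul _), integral_add ha1 (integrable_const _),
        integral_add (hfint k) ((hgsq k).const_mul _), integral_const_mul, integral_const_mul,
        integral_const_mul, integral_const_mul, integral_const, hPzero k, hQzero k]
      simp [measure_univ]
    rw [hcalc] at hle
    have h5 : (-(3 * η / 4) + L * η ^ 2) * (∫ ω, ‖gradient f (θ k ω)‖ ^ 2 ∂μ)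
        ≤ (-(η / 2)) * ∫ ω, ‖gradient f (θ k ω)‖ ^ 2 ∂μ := by
      refine mul_le_mul_of_nonneg_right ?_ (hGpos k)
      nlinarith
    have h6 : (L * η ^ 2 / 2) * (∫ ω, ‖r k ω‖ ^ 2 ∂μ) ≤ (L * η ^ 2 / 2) * V :=
      mul_le_mul_of_nonneg_left (hRle k) (by positivity)
    rw [hcstdef]
    linarith
  -- telescoping
  have hF0 : ∫ ω, f (θ 0 ω) ∂μ = f θ0 := by
    simp [hθ0]
  have hFK : fstar ≤ ∫ ω, f (θ K ω) ∂μ := by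
    have h1 : ∫ _ω, fstar ∂μ ≤ ∫ ω, f (θ K ω) ∂μ :=
      integral_mono (integrable_const fstar) (hfint K) fun ω => hflb (θ K ω)
    simpa using h1
  have htel : η / 2 * ∑ k ∈ Finset.range K, (∫ ω, ‖gradient f (θ k ω)‖ ^ 2 ∂μ)
      ≤ (f θ0 - fstar) + K * cst := by
    have h3 : ∑ k ∈ Finset.range K,
        ((∫ ω, f (θ k ω) ∂μ) - ∫ ω, f (θ (k + 1) ω) ∂μ)
        = (∫ ω, f (θ 0 ω) ∂μ) - ∫ ω, f (θ K ω) ∂μ :=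
      Finset.sum_range_sub' (fun k => ∫ ω, f (θ k ω) ∂μ) K
    have h2 : ∑ k ∈ Finset.range K,
        (η / 2 * (∫ ω, ‖gradient f (θ k ω)‖ ^ 2 ∂μ) - cst)
        ≤ ∑ k ∈ Finset.range K, ((∫ ω, f (θ k ω) ∂μ) - ∫ ω, f (θ (k + 1) ω) ∂μ) :=
      Finset.sum_le_sum fun k _ => by linarith [hstep k]
    have h4 : ∑ k ∈ Finset.range K,
        (η / 2 * (∫ ω, ‖gradient f (θ k ω)‖ ^ 2 ∂μ) - cst)
        = η / 2 * (∑ k ∈ Finset.range K, ∫ ω, ‖gradient f (θ k ω)‖ ^ 2 ∂μ) - K * cst := by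
      rw [Finset.sum_sub_distrib, Finset.sum_const, Finset.card_range, nsmul_eq_mul,
        ← Finset.mul_sum]
    rw [h4, h3] at h2
    linarith
  -- conclusion by contradiction
  by_contra hcon
  push_neg at hcon
  set B : ℝ := 4 * (f θ0 - fstar) / (α * s)
      + 2 * L * α * (V + 2 * btil ^ 2) / s + 2 * btil ^ 2 with hBdef
  have hlt : (K:ℝ) * B < ∑ k ∈ Finset.range K, ∫ ω, ‖gradient f (θ k ω)‖ ^ 2 ∂μ := by
    have h1 : ∑ _k ∈ Finset.range K, B < ∑ k ∈ Finset.range K,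
        ∫ ω, ‖gradient f (θ k ω)‖ ^ 2 ∂μ := by
      refine Finset.sum_lt_sum_of_nonempty ⟨0, Finset.mem_range.2 hK⟩ fun k hk => ?_
      exact hcon k (Finset.mem_range.1 hk)
    rwa [Finset.sum_const, Finset.card_range, nsmul_eq_mul] at h1
  have hD : 0 ≤ f θ0 - fstar := sub_nonneg.2 (hflb θ0)
  have hKr : (K:ℝ) = s ^ 2 := hssq.symm
  have hM0 : (0:ℝ) ≤ V + 2 * btil ^ 2 := by positivity
  have e1 : η / 2 * ((K:ℝ) * B) = 2 * (f θ0 - fstar) + L * α ^ 2 * (V + 2 * btil ^ 2)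
      + α * s * btil ^ 2 := by
    rw [hKr, hBdef, hηdef]
    field_simp
    ring
  have e2 : (f θ0 - fstar) + (K:ℝ) * cst = (f θ0 - fstar) + α * s * btil ^ 2
      + L * α ^ 2 * (V + 2 * btil ^ 2) / 2 := by
    rw [hKr, hcstdef, hηdef]
    field_simp
    ring
  have hmul : η / 2 * ((K:ℝ) * B) < η / 2 * ∑ k ∈ Finset.range K,
      ∫ ω, ‖gradient f (θ k ω)‖ ^ 2 ∂μ :=
    mul_lt_mul_of_pos_left hlt (by positivity)
  have hLa2 : 0 ≤ L * α ^ 2 * (V + 2 * btil ^ 2) := by positivity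
  linarith
end
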